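/- arXiv:1806.11429 — 4 statements merged into one kernel-verified Lean document; each statement's English description precedes it below -/
import Mathlib

section
/- Let Z ∈ ℝ^{N×N} be a feasible point of the SDP {Z ⪰ 0, Z ≥ 0 entrywise, Tr(Z) = k, Zφ = φ}, where φ ∈ ℝ^N has nonzero blocks φ_a ∈ ℝ^{n_a} with strictly positive entries, and suppose Z is block-diagonal with respect to the partition (i.e., Z^{(a,b)} = 0 for a ≠ b). Then Z = X, where X is the block-diagonal matrix with blocks X^{(a,a)} = φ_a φ_aᵀ / ‖φ_a‖². -/
open Matrix Finset

lemma psd_trace_zero {n : Type*} [Fintype n] [DecidableEq n] {Q : Matrix n n ℝ}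
    (hQ : Q.PosSemidef) (h : Q.trace = 0) : Q = 0 := by
  have hquad : ∀ x : n → ℝ, star x ⬝ᵥ Q *ᵥ x = x ⬝ᵥ Q *ᵥ x := fun x => rfl
  have hnn : ∀ i, 0 ≤ Q i i := by
    intro i
    have := hQ.dotProduct_mulVec_nonneg (Pi.single i 1)
    simpa [dotProduct, mulVec, Pi.single_apply, Finset.sum_ite_eq] using this
  have hdiag : ∀ i, Q i i = 0 := by
    intro i
    have h0 : ∑ i, Q i i = 0 := by simpa [Matrix.trace, Matrix.diag] using h
    exact (Finset.sum_eq_zero_iff_of_nonneg (fun i _ => hnn i)).mp h0 i (mem_univ i)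
  ext i j
  have hz : Q *ᵥ Pi.single j 1 = 0 := by
    rw [← hQ.dotProduct_mulVec_zero_iff]
    simpa [dotProduct, mulVec, Pi.single_apply, Finset.sum_ite_eq] using hdiag j
  have := congr_fun hz i
  simpa [mulVec, dotProduct, Pi.single_apply, Finset.sum_ite_eq] using this

theorem stmt_9 {N k : ℕ}
    (Γ : Fin k → Finset (Fin N))
    (hdisj : ∀ a b, a ≠ b → Disjoint (Γ a) (Γ b))
    (hcover : ∀ i, ∃ a, i ∈ Γ a)
    (hne : ∀ a, (Γ a).Nonempty)
    (φ : Fin N → ℝ) (hφ : ∀ i, 0 < φ i)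
    (Z : Matrix (Fin N) (Fin N) ℝ)
    (hZpsd : Z.PosSemidef) (hZnn : ∀ i j, 0 ≤ Z i j)
    (hZtr : Z.trace = (k : ℝ)) (hZφ : Z.mulVec φ = φ)
    (hbd : ∀ (a b : Fin k), a ≠ b → ∀ i ∈ Γ a, ∀ j ∈ Γ b, Z i j = 0) :
    ∀ i j, Z i j = ∑ a, if i ∈ Γ a ∧ j ∈ Γ a then
        φ i * φ j / (∑ l ∈ Γ a, (φ l) ^ 2) else 0 := by
  classical
  set s : Fin k → ℝ := fun a => ∑ l ∈ Γ a, (φ l)^2 with hs_def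
  have hs : ∀ a, 0 < s a := fun a => Finset.sum_pos (fun l _ => pow_pos (hφ l) 2) (hne a)
  set ψ : Fin k → Fin N → ℝ := fun a i => if i ∈ Γ a then φ i else 0 with hψ_def
  have hZsym : ∀ i j, Z i j = Z j i := by
    intro i j
    have := hZpsd.1
    rw [Matrix.IsHermitian] at this
    conv_lhs => rw [← this]
    simp [Matrix.conjTranspose_apply]
  -- Z *ᵥ ψ a = ψ a
  have hZψ : ∀ a, Z *ᵥ ψ a = ψ a := by
    intro a
    funext i
    have hsum : (Z *ᵥ ψ a) i = ∑ j ∈ Γ a, Z i j * φ j := by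
      rw [mulVec, dotProduct]
      rw [← Finset.sum_subset (Finset.subset_univ (Γ a))
        (fun j _ hj => by simp [hψ_def, hj])]
      exact Finset.sum_congr rfl fun j hj => by simp [hψ_def, hj]
    by_cases hi : i ∈ Γ a
    · have hφi : φ i = ∑ j, Z i j * φ j := by
        have := congr_fun hZφ i
        rw [mulVec, dotProduct] at this
        exact this.symm
      have : ∑ j ∈ Γ a, Z i j * φ j = ∑ j, Z i j * φ j := by
        apply Finset.sum_subset (Finset.subset_univ (Γ a))
        intro j _ hj
        obtain ⟨b, hb⟩ := hcover j
        have hba : b ≠ a := fun h => hj (h ▸ hb)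
        rw [hbd a b (Ne.symm hba) i hi j hb, zero_mul]
      rw [hsum, this, ← hφi]
      simp [hψ_def, hi]
    · obtain ⟨b, hb⟩ := hcover i
      have hba : b ≠ a := fun h => hi (h ▸ hb)
      rw [hsum]
      have : ∀ j ∈ Γ a, Z i j * φ j = 0 := fun j hj => by
        rw [hbd b a hba i hb j hj, zero_mul]
      rw [Finset.sum_eq_zero this]
      simp [hψ_def, hi]
  -- orthogonality
  have hdot : ∀ a b, ψ a ⬝ᵥ ψ b = if a = b then s a else 0 := by
    intro a b
    by_cases hab : a = b
    · subst hab
      simp only [if_pos rfl, dotProduct, hψ_def]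
      rw [← Finset.sum_subset (Finset.subset_univ (Γ a))
        (fun j _ hj => by simp [hj])]
      exact Finset.sum_congr rfl fun j hj => by simp [hj]; ring
    · simp only [if_neg hab, dotProduct]
      apply Finset.sum_eq_zero
      intro i _
      by_cases hia : i ∈ Γ a
      · have : i ∉ Γ b := fun hib => (Finset.disjoint_left.mp (hdisj a b hab)) hia hib
        simp [hψ_def, this]
      · simp [hψ_def, hia]
  set X : Matrix (Fin N) (Fin N) ℝ :=
    ∑ a, (s a)⁻¹ • vecMulVec (ψ a) (ψ a) with hX_def
  have hMM : ∀ a b, vecMulVec (ψ a) (ψ a) * vecMulVec (ψ b) (ψ b)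
      = (ψ a ⬝ᵥ ψ b) • vecMulVec (ψ a) (ψ b) := by
    intro a b
    ext i j
    simp only [mul_apply, vecMulVec_apply, Matrix.smul_apply, smul_eq_mul, dotProduct,
      Finset.sum_mul]
    exact Finset.sum_congr rfl fun m _ => by ring
  have hZM : ∀ a, Z * vecMulVec (ψ a) (ψ a) = vecMulVec (ψ a) (ψ a) := by
    intro a
    ext i j
    have h := congr_fun (hZψ a) i
    rw [mulVec, dotProduct] at h
    simp only [mul_apply, vecMulVec_apply]
    calc ∑ m, Z i m * (ψ a m * ψ a j) = (∑ m, Z i m * ψ a m) * ψ a j := by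
          rw [Finset.sum_mul]; exact Finset.sum_congr rfl fun m _ => by ring
      _ = ψ a i * ψ a j := by rw [h]
  have hMZ : ∀ a, vecMulVec (ψ a) (ψ a) * Z = vecMulVec (ψ a) (ψ a) := by
    intro a
    ext i j
    have h := congr_fun (hZψ a) j
    rw [mulVec, dotProduct] at h
    simp only [mul_apply, vecMulVec_apply]
    calc ∑ m, ψ a i * ψ a m * Z m j = ψ a i * (∑ m, Z j m * ψ a m) := by
          rw [Finset.mul_sum]
          exact Finset.sum_congr rfl fun m _ => by rw [hZsym m j]; ring
      _ = ψ a i * ψ a j := by rw [h]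
  have hZX : Z * X = X := by
    rw [hX_def, Finset.mul_sum]
    exact Finset.sum_congr rfl fun a _ => by rw [Matrix.mul_smul, hZM]
  have hXZ : X * Z = X := by
    rw [hX_def, Finset.sum_mul]
    exact Finset.sum_congr rfl fun a _ => by rw [Matrix.smul_mul, hMZ]
  have hXX : X * X = X := by
    rw [hX_def, Finset.sum_mul_sum]
    apply Finset.sum_congr rfl
    intro a _
    rw [Finset.sum_eq_single a]
    · rw [Matrix.smul_mul, Matrix.mul_smul, hMM, hdot, if_pos rfl, smul_smul, smul_smul]
      congr 1
      field_simp
    · intro b _ hba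
      rw [Matrix.smul_mul, Matrix.mul_smul, hMM, hdot, if_neg (Ne.symm hba)]
      simp
    · intro h; exact absurd (mem_univ a) h
  -- X is symmetric
  have hXsym : Xᴴ = X := by
    rw [hX_def]
    rw [Matrix.conjTranspose_sum]
    apply Finset.sum_congr rfl
    intro a _
    ext i j
    simp [Matrix.conjTranspose_apply, vecMulVec_apply, mul_comm]
  -- trace X = k
  have htrM : ∀ a, (vecMulVec (ψ a) (ψ a)).trace = s a := by
    intro a
    have := hdot a a
    rw [if_pos rfl] at this
    rw [← this]
    simp [Matrix.trace, Matrix.diag, vecMulVec_apply, dotProduct]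
  have htrX : X.trace = (k : ℝ) := by
    rw [hX_def, Matrix.trace_sum]
    have : ∀ a ∈ (univ : Finset (Fin k)), ((s a)⁻¹ • vecMulVec (ψ a) (ψ a)).trace = 1 := by
      intro a _
      rw [Matrix.trace_smul, htrM, smul_eq_mul, inv_mul_cancel₀ (hs a).ne']
    rw [Finset.sum_congr rfl this]
    simp
  -- Q := Z - X is PSD with trace 0
  have hQ : Z - X = (1 - X)ᴴ * Z * (1 - X) := by
    rw [Matrix.conjTranspose_sub, hXsym, Matrix.conjTranspose_one, Matrix.sub_mul,
      Matrix.one_mul, hXZ, Matrix.mul_sub, Matrix.mul_one, Matrix.sub_mul, hZX, hXX]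
    abel
  have hQpsd : (Z - X).PosSemidef := by
    rw [hQ]; exact hZpsd.conjTranspose_mul_mul_same (1 - X)
  have hQtr : (Z - X).trace = 0 := by
    rw [Matrix.trace_sub, hZtr, htrX, sub_self]
  have hZeqX : Z = X := by
    have := psd_trace_zero hQpsd hQtr
    rwa [sub_eq_zero] at this
  intro i j
  rw [hZeqX, hX_def]
  rw [Matrix.sum_apply]
  apply Finset.sum_congr rfl
  intro a _
  simp only [Matrix.smul_apply, vecMulVec_apply, smul_eq_mul, hψ_def]
  by_cases hi : i ∈ Γ a
  · by_cases hj : j ∈ Γ a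
    · simp only [if_pos hi, if_pos hj, if_pos (And.intro hi hj), div_eq_mul_inv, hs_def]
      ring
    · simp [hi, hj]
  · simp [hi]
end

section
/- Sufficient dual certificate condition: Let X be a feasible solution of min ⟨A, Z⟩ subject to Z ⪰ 0, Z ≥ 0, Tr(Z) = k, Zφ = φ, where X^{(a,a)} = φ_a φ_aᵀ/‖φ_a‖² and X^{(a,b)} = 0 for a ≠ b with each φ_a entrywise positive. Suppose there exist a symmetric matrix B and a positive semidefinite matrix Q with A + 𝒜*(λ) = Q + B for some dual variable λ (i.e., Q + B − A = (1/2)(αφᵀ + φαᵀ) + zI for some α ∈ ℝ^N, z ∈ ℝ), QX = 0, B^{(a,a)} = 0 for all a, and B^{(a,b)} entrywise strictly positive for all a ≠ b. Then X is the unique global minimizer of the SDP. -/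
open Matrix Finset

lemma psd_diag_nonneg' {n : ℕ} {M : Matrix (Fin n) (Fin n) ℝ} (hM : M.PosSemidef)
    (i : Fin n) : 0 ≤ M i i := by
  exact hM.diag_nonneg

lemma psd_trace_mul_nonneg' {n : ℕ} {Q Z : Matrix (Fin n) (Fin n) ℝ}
    (hQ : Q.PosSemidef) (hZ : Z.PosSemidef) : 0 ≤ (Q * Z).trace := by
  obtain ⟨C, rfl⟩ : ∃ C : Matrix (Fin n) (Fin n) ℝ, Q = Cᴴ * C := by
    open scoped MatrixOrder in
    simpa [star_eq_conjTranspose] using CStarAlgebra.nonneg_iff_eq_star_mul_self.mp hQ.nonneg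
  rw [Matrix.mul_assoc, Matrix.trace_mul_comm]
  have hpsd : (C * Z * Cᴴ).PosSemidef := by
    have := hZ.mul_mul_conjTranspose_same C
    exact this
  rw [Matrix.trace]
  exact Finset.sum_nonneg fun i _ => psd_diag_nonneg' hpsd i

lemma psd_trace_zero_eq_zero' {n : ℕ} {M : Matrix (Fin n) (Fin n) ℝ}
    (hM : M.PosSemidef) (h : M.trace = 0) : M = 0 := by
  obtain ⟨C, rfl⟩ : ∃ C : Matrix (Fin n) (Fin n) ℝ, M = Cᴴ * C := by
    open scoped MatrixOrder in
    simpa [star_eq_conjTranspose] using CStarAlgebra.nonneg_iff_eq_star_mul_self.mp hM.nonneg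
  have hC : C = 0 := by
    have htr : (Cᴴ * C).trace = ∑ i, ∑ j, (C j i) ^ 2 := by
      rw [Matrix.trace]
      refine Finset.sum_congr rfl fun i _ => ?_
      simp [Matrix.mul_apply, Matrix.conjTranspose_apply, Matrix.diag, sq]
    rw [htr] at h
    ext j i
    have h1 : ∀ i ∈ Finset.univ (α := Fin n), (0:ℝ) ≤ ∑ j, (C j i)^2 :=
      fun i _ => Finset.sum_nonneg fun j _ => sq_nonneg _
    have h2 := (Finset.sum_eq_zero_iff_of_nonneg h1).mp h i (Finset.mem_univ i)
    have h3 := (Finset.sum_eq_zero_iff_of_nonneg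
      (fun j _ => sq_nonneg (C j i))).mp h2 j (Finset.mem_univ j)
    simpa using pow_eq_zero_iff (n := 2) (by norm_num) |>.mp h3
  rw [hC]; simp

theorem stmt_10 {N k : ℕ}
    (Γ : Fin k → Finset (Fin N))
    (hdisj : ∀ a b, a ≠ b → Disjoint (Γ a) (Γ b))
    (hcover : ∀ i, ∃ a, i ∈ Γ a)
    (hne : ∀ a, (Γ a).Nonempty)
    (φ : Fin N → ℝ) (hφ : ∀ i, 0 < φ i)
    (A : Matrix (Fin N) (Fin N) ℝ) (hA : A.IsSymm)
    (X : Matrix (Fin N) (Fin N) ℝ)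
    (hX : ∀ i j, X i j = ∑ a, if i ∈ Γ a ∧ j ∈ Γ a then
        φ i * φ j / (∑ l ∈ Γ a, (φ l) ^ 2) else 0)
    (B Q : Matrix (Fin N) (Fin N) ℝ) (α : Fin N → ℝ) (z : ℝ)
    (hBsym : B.IsSymm) (hQpsd : Q.PosSemidef)
    (hdual : ∀ i j, (Q + B - A) i j
        = (α i * φ j + φ i * α j) / 2 + (if i = j then z else 0))
    (hQX : Q * X = 0)
    (hBdiag : ∀ a : Fin k, ∀ i ∈ Γ a, ∀ j ∈ Γ a, B i j = 0)
    (hBpos : ∀ a b : Fin k, a ≠ b → ∀ i ∈ Γ a, ∀ j ∈ Γ b, 0 < B i j) :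
    ∀ Z : Matrix (Fin N) (Fin N) ℝ,
      Z.PosSemidef → (∀ i j, 0 ≤ Z i j) → Z.trace = (k : ℝ) → Z.mulVec φ = φ →
        (∑ i, ∑ j, A i j * X i j ≤ ∑ i, ∑ j, A i j * Z i j)
        ∧ (∑ i, ∑ j, A i j * Z i j = ∑ i, ∑ j, A i j * X i j → Z = X) := by
  classical
  intro Z hZpsd hZnn hZtr hZφ
  choose blk hblk using hcover
  have huniq : ∀ i a, i ∈ Γ a → blk i = a := by
    intro i a h
    by_contra hne'
    exact (Finset.disjoint_left.mp (hdisj _ _ hne') (hblk i)) h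
  have hS : ∀ a, 0 < ∑ l ∈ Γ a, φ l ^ 2 := fun a =>
    Finset.sum_pos (fun l _ => pow_pos (hφ l) 2) (hne a)
  -- block formula for X
  have hXeq : ∀ i j, X i j =
      if blk i = blk j then φ i * φ j / (∑ l ∈ Γ (blk i), φ l ^ 2) else 0 := by
    intro i j
    rw [hX]
    by_cases h : blk i = blk j
    · rw [if_pos h, Finset.sum_eq_single (blk i)]
      · rw [if_pos ⟨hblk i, by rw [h]; exact hblk j⟩]
      · intro a _ hna
        rw [if_neg]
        rintro ⟨hia, -⟩
        exact hna (huniq i a hia).symm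
      · intro h'; exact absurd (Finset.mem_univ _) h'
    · rw [if_neg h]
      refine Finset.sum_eq_zero fun a _ => ?_
      rw [if_neg]
      rintro ⟨hia, hja⟩
      exact h ((huniq i a hia).trans (huniq j a hja).symm)
  have hXsym' : ∀ i j, X i j = X j i := by
    intro i j
    rw [hXeq, hXeq]
    by_cases h : blk i = blk j
    · rw [if_pos h, if_pos h.symm, h, mul_comm]
    · rw [if_neg h, if_neg (Ne.symm h)]
  have hXrow : ∀ i, ∑ j, X i j * φ j = φ i := by
    intro i
    have key : ∀ j, X i j * φ j =
        if j ∈ Γ (blk i) then φ i * φ j ^ 2 / (∑ l ∈ Γ (blk i), φ l ^ 2) else 0 := by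
      intro j
      rw [hXeq]
      by_cases hj : j ∈ Γ (blk i)
      · rw [if_pos (huniq j (blk i) hj).symm, if_pos hj]; ring
      · rw [if_neg (fun h => hj (by rw [h]; exact hblk j)), if_neg hj, zero_mul]
    rw [Finset.sum_congr rfl fun j _ => key j, Finset.sum_ite_mem, Finset.univ_inter]
    have hSne := (hS (blk i)).ne'
    rw [← Finset.sum_div, ← Finset.mul_sum]
    field_simp
  have hXtr : ∑ i, X i i = (k : ℝ) := by
    have hfib : ∀ a, Finset.univ.filter (fun i => blk i = a) = Γ a := by
      intro a
      ext i
      simp only [Finset.mem_filter, Finset.mem_univ, true_and]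
      exact ⟨fun h => h ▸ hblk i, huniq i a⟩
    rw [← Finset.sum_fiberwise_of_maps_to (g := blk) (fun i _ => Finset.mem_univ (blk i))
      (fun i => X i i)]
    have : ∀ a, ∑ i ∈ Finset.univ.filter (fun i => blk i = a), X i i = 1 := by
      intro a
      rw [hfib a]
      have : ∀ i ∈ Γ a, X i i = φ i ^ 2 / (∑ l ∈ Γ a, φ l ^ 2) := by
        intro i hi
        rw [hXeq, if_pos rfl, huniq i a hi, sq]
      rw [Finset.sum_congr rfl this, ← Finset.sum_div]
      exact div_self (hS a).ne'
    rw [Finset.sum_congr rfl fun a _ => this a]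
    simp
  -- Z properties
  have hZsym' : ∀ i j, Z i j = Z j i := by
    intro i j
    have := hZpsd.1.apply j i
    simpa using this
  have hZrow : ∀ i, ∑ j, Z i j * φ j = φ i := by
    intro i
    have := congrFun hZφ i
    simpa [Matrix.mulVec, dotProduct] using this
  have hZtr' : ∑ i, Z i i = (k : ℝ) := by
    simpa [Matrix.trace, Matrix.diag] using hZtr
  -- the linear functional computation
  have hLsum : ∀ (W : Matrix (Fin N) (Fin N) ℝ), (∀ i j, W i j = W j i) →
      (∀ i, ∑ j, W i j * φ j = φ i) → (∑ i, W i i = (k : ℝ)) →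
      ∑ i, ∑ j, ((α i * φ j + φ i * α j) / 2 + (if i = j then z else 0)) * W i j
        = ∑ i, α i * φ i + z * k := by
    intro W hsym hrow htr
    have expand : ∀ i j, ((α i * φ j + φ i * α j) / 2 + (if i = j then z else 0)) * W i j
        = α i / 2 * (W i j * φ j) + α j / 2 * (W j i * φ i)
          + (if i = j then z * W i j else 0) := by
      intro i j
      rw [hsym i j]
      split_ifs with h
      · subst h; ring
      · ring
    rw [Finset.sum_congr rfl fun i _ => Finset.sum_congr rfl fun j _ => expand i j]
    simp only [Finset.sum_add_distrib]
    have p1 : ∑ i, ∑ j, α i / 2 * (W i j * φ j) = ∑ i, α i / 2 * φ i := by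
      refine Finset.sum_congr rfl fun i _ => ?_
      rw [← Finset.mul_sum, hrow i]
    have p2 : ∑ i, ∑ j, α j / 2 * (W j i * φ i) = ∑ j, α j / 2 * φ j := by
      rw [Finset.sum_comm]
      refine Finset.sum_congr rfl fun j _ => ?_
      rw [← Finset.mul_sum, hrow j]
    have p3 : ∑ i, ∑ j, (if i = j then z * W i j else 0) = z * k := by
      have h1 : ∀ i, ∑ j, (if i = j then z * W i j else 0) = z * W i i := by
        intro i
        simp [Finset.sum_ite_eq]
      rw [Finset.sum_congr rfl fun i _ => h1 i, ← Finset.mul_sum, htr]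
    have pc : ∑ i, α i / 2 * φ i + ∑ i, α i / 2 * φ i = ∑ i, α i * φ i := by
      rw [← Finset.sum_add_distrib]
      exact Finset.sum_congr rfl fun i _ => by ring
    rw [p1, p2, p3]
    linarith
  -- decomposition of A
  have hAij : ∀ i j, A i j = Q i j + B i j
      - ((α i * φ j + φ i * α j) / 2 + (if i = j then z else 0)) := by
    intro i j
    have h := hdual i j
    simp only [Matrix.sub_apply, Matrix.add_apply] at h
    linarith
  have hsplit : ∀ (W : Matrix (Fin N) (Fin N) ℝ), (∀ i j, W i j = W j i) →
      (∀ i, ∑ j, W i j * φ j = φ i) → (∑ i, W i i = (k : ℝ)) →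
      ∑ i, ∑ j, A i j * W i j
        = ∑ i, ∑ j, Q i j * W i j + ∑ i, ∑ j, B i j * W i j
          - (∑ i, α i * φ i + z * k) := by
    intro W hsym hrow htr
    have h1 : ∀ i j, A i j * W i j = Q i j * W i j + B i j * W i j
        - ((α i * φ j + φ i * α j) / 2 + (if i = j then z else 0)) * W i j := by
      intro i j; rw [hAij i j]; ring
    rw [Finset.sum_congr rfl fun i _ => Finset.sum_congr rfl fun j _ => h1 i j]
    simp only [Finset.sum_sub_distrib, Finset.sum_add_distrib]
    rw [hLsum W hsym hrow htr]
  -- nonnegativity facts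
  have hBnn : ∀ i j, 0 ≤ B i j := by
    intro i j
    by_cases h : blk i = blk j
    · rw [hBdiag (blk i) i (hblk i) j (by rw [h]; exact hblk j)]
    · exact le_of_lt (hBpos (blk i) (blk j) h i (hblk i) j (hblk j))
  have hBZnn : 0 ≤ ∑ i, ∑ j, B i j * Z i j :=
    Finset.sum_nonneg fun i _ => Finset.sum_nonneg fun j _ =>
      mul_nonneg (hBnn i j) (hZnn i j)
  have htraceform : ∀ (W : Matrix (Fin N) (Fin N) ℝ), (∀ i j, W i j = W j i) →
      ∑ i, ∑ j, Q i j * W i j = (Q * W).trace := by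
    intro W hsym
    rw [Matrix.trace]
    refine Finset.sum_congr rfl fun i _ => ?_
    rw [Matrix.diag, Matrix.mul_apply]
    exact Finset.sum_congr rfl fun j _ => by rw [hsym i j]
  have hQZnn : 0 ≤ ∑ i, ∑ j, Q i j * Z i j := by
    rw [htraceform Z hZsym']
    exact psd_trace_mul_nonneg' hQpsd hZpsd
  have hQXzero : ∑ i, ∑ j, Q i j * X i j = 0 := by
    rw [htraceform X hXsym', hQX, Matrix.trace_zero]
  have hBXzero : ∑ i, ∑ j, B i j * X i j = 0 := by
    refine Finset.sum_eq_zero fun i _ => Finset.sum_eq_zero fun j _ => ?_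
    by_cases h : blk i = blk j
    · rw [hBdiag (blk i) i (hblk i) j (by rw [h]; exact hblk j), zero_mul]
    · rw [hXeq, if_neg h, mul_zero]
  have hAX := hsplit X hXsym' hXrow hXtr
  have hAZ := hsplit Z hZsym' hZrow hZtr'
  constructor
  · rw [hAX, hAZ, hQXzero, hBXzero]
    linarith
  · intro heq
    rw [hAX, hAZ, hQXzero, hBXzero] at heq
    have hBZ0 : ∑ i, ∑ j, B i j * Z i j = 0 := by linarith
    have hterm : ∀ i j, B i j * Z i j = 0 := by
      intro i j
      have h1 : ∀ i ∈ Finset.univ (α := Fin N), (0:ℝ) ≤ ∑ j, B i j * Z i j :=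
        fun i _ => Finset.sum_nonneg fun j _ => mul_nonneg (hBnn i j) (hZnn i j)
      have h2 := (Finset.sum_eq_zero_iff_of_nonneg h1).mp hBZ0 i (Finset.mem_univ i)
      exact (Finset.sum_eq_zero_iff_of_nonneg
        (fun j _ => mul_nonneg (hBnn i j) (hZnn i j))).mp h2 j (Finset.mem_univ j)
    have hZblock : ∀ i j, blk i ≠ blk j → Z i j = 0 := by
      intro i j h
      have hb := hBpos (blk i) (blk j) h i (hblk i) j (hblk j)
      rcases mul_eq_zero.mp (hterm i j) with h' | h'
      · exact absurd h' (ne_of_gt hb)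
      · exact h'
    have hXblock : ∀ i j, blk i ≠ blk j → X i j = 0 := fun i j h => by
      rw [hXeq, if_neg h]
    -- key: any symmetric block-diagonal matrix with Wφ = φ satisfies W * X = X
    have key : ∀ (W : Matrix (Fin N) (Fin N) ℝ), (∀ i j, W i j = W j i) →
        (∀ i j, blk i ≠ blk j → W i j = 0) → (∀ i, ∑ l, W i l * φ l = φ i) →
        W * X = X := by
      intro W hsym hblock hrow'
      have hWp : ∀ i a, ∑ l ∈ Γ a, W i l * φ l = if blk i = a then φ i else 0 := by
        intro i a
        by_cases h : blk i = a
        · rw [if_pos h]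
          calc ∑ l ∈ Γ a, W i l * φ l = ∑ l, W i l * φ l := by
                refine Finset.sum_subset (Finset.subset_univ _) fun l _ hl => ?_
                have hw : W i l = 0 := hblock i l (by
                  rw [h]; intro hh; exact hl (hh ▸ hblk l))
                rw [hw, zero_mul]
            _ = φ i := hrow' i
        · rw [if_neg h]
          refine Finset.sum_eq_zero fun l hl => ?_
          have hw : W i l = 0 := hblock i l (by rw [huniq l a hl]; exact h)
          rw [hw, zero_mul]
      ext i j
      rw [Matrix.mul_apply, hXeq]
      have hterm' : ∀ l, W i l * X l j =
          if l ∈ Γ (blk j) then W i l * φ l * (φ j / (∑ m ∈ Γ (blk j), φ m ^ 2))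
          else 0 := by
        intro l
        rw [hXeq]
        by_cases hl : l ∈ Γ (blk j)
        · rw [if_pos (huniq l (blk j) hl), if_pos hl, huniq l (blk j) hl]
          ring
        · rw [if_neg (fun hh => hl (by rw [← hh]; exact hblk l)), if_neg hl, mul_zero]
      rw [Finset.sum_congr rfl fun l _ => hterm' l, Finset.sum_ite_mem,
        Finset.univ_inter, ← Finset.sum_mul, hWp i (blk j)]
      by_cases h : blk i = blk j
      · rw [if_pos h, if_pos h, h]; ring
      · rw [if_neg h, if_neg h, zero_mul]
    have hZX := key Z hZsym' hZblock hZrow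
    have hXX := key X hXsym' hXblock hXrow
    have hXT : Xᵀ = X := by
      ext i j
      rw [Matrix.transpose_apply]
      exact hXsym' j i
    have hZT : Zᵀ = Z := by
      ext i j
      rw [Matrix.transpose_apply]
      exact hZsym' j i
    have hXZ : X * Z = X := by
      have h1 : (X * Z)ᵀ = X := by
        rw [Matrix.transpose_mul, hXT, hZT, hZX]
      rw [← Matrix.transpose_transpose (X * Z), h1, hXT]
    have hfact : Z - X = (1 - X) * Z * (1 - X) := by
      rw [Matrix.sub_mul, Matrix.one_mul, hXZ, Matrix.sub_mul, Matrix.mul_sub,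
        Matrix.mul_one, hZX, Matrix.mul_sub, Matrix.mul_one, hXX]
      abel
    have hXH : Xᴴ = X := by
      ext i j
      rw [Matrix.conjTranspose_apply]
      simpa using hXsym' j i
    have hpsd : (Z - X).PosSemidef := by
      have h1 := hZpsd.mul_mul_conjTranspose_same (1 - X)
      have h2 : (1 - X)ᴴ = 1 - X := by
        rw [Matrix.conjTranspose_sub, Matrix.conjTranspose_one, hXH]
      rw [h2] at h1
      rw [hfact]
      exact h1
    have htr0 : (Z - X).trace = 0 := by
      have hXtr' : X.trace = (k : ℝ) := by
        rw [Matrix.trace]; exact hXtr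
      rw [Matrix.trace_sub, hZtr, hXtr']
      ring
    have := psd_trace_zero_eq_zero' hpsd htr0
    exact sub_eq_zero.mp this
end

section
/- k-means fails on two parallel lines: consider 2n points x_{1,i} = (−Δ/2, (i−1)/(n−1)) and x_{2,i} = (Δ/2, (i−1)/(n−1)) for 1 ≤ i ≤ n, with n even. The k-means (k=2) cost of the 'vertical' partition with centers c₁ = (−Δ/2, 1/2), c₂ = (Δ/2, 1/2) equals n(2n−1)/(3(n−1)) − n/2, while the cost of the 'horizontal' partition with centers (0, (n−2)/(4(n−1))) and (0, (3n−2)/(4(n−1))) equals nΔ²/2 + n(n−2)/(6(n−1)) − n(n−2)²/(8(n−1)²). Consequently, the average costs converge to 1/12 and Δ²/4 + 1/48 respectively as n → ∞, so for Δ < 1/2 and n large the horizontal partition has strictly smaller k-means cost than the vertical one. -/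
open Finset Filter

/-- Squared Euclidean distance in the plane. -/
noncomputable def dist2 (p c : ℝ × ℝ) : ℝ := (p.1 - c.1) ^ 2 + (p.2 - c.2) ^ 2

/-- k-means cost of the "vertical" partition (each line one cluster),
with centers `(-Δ/2, 1/2)` and `(Δ/2, 1/2)`, for the two-lines data set. -/
noncomputable def psiV (Δ : ℝ) (n : ℕ) : ℝ :=
  ∑ i ∈ Finset.range n,
    (dist2 (-Δ / 2, (i : ℝ) / ((n : ℝ) - 1)) (-Δ / 2, 1 / 2)
      + dist2 (Δ / 2, (i : ℝ) / ((n : ℝ) - 1)) (Δ / 2, 1 / 2))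

/-- k-means cost of the "horizontal" partition (lower halves of both lines one
cluster, upper halves the other), with centers `(0, (n-2)/(4(n-1)))` and
`(0, (3n-2)/(4(n-1)))`. -/
noncomputable def psiH (Δ : ℝ) (n : ℕ) : ℝ :=
  ∑ i ∈ Finset.range n,
    (let c : ℝ × ℝ :=
      if i < n / 2 then (0, ((n : ℝ) - 2) / (4 * ((n : ℝ) - 1)))
      else (0, (3 * (n : ℝ) - 2) / (4 * ((n : ℝ) - 1)))
    dist2 (-Δ / 2, (i : ℝ) / ((n : ℝ) - 1)) c
      + dist2 (Δ / 2, (i : ℝ) / ((n : ℝ) - 1)) c)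

lemma sum_quad (A B C : ℝ) (M : ℕ) :
    ∑ i ∈ Finset.range M, (A*(i:ℝ)^2 + B*(i:ℝ) + C)
      = A*((M:ℝ)*((M:ℝ)-1)*(2*(M:ℝ)-1)/6) + B*((M:ℝ)*((M:ℝ)-1)/2) + (M:ℝ)*C := by
  induction M with
  | zero => simp
  | succ m ih => rw [Finset.sum_range_succ, ih]; push_cast; ring

lemma psiV_eq (Δ : ℝ) {n : ℕ} (hn : 2 ≤ n) :
    psiV Δ n = (n : ℝ) * (2 * n - 1) / (3 * ((n : ℝ) - 1)) - n / 2 := by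
  have hn2 : (2:ℝ) ≤ (n:ℝ) := by exact_mod_cast hn
  have hd : ((n:ℝ)-1) ≠ 0 := by linarith
  have hstep : ∀ i ∈ Finset.range n,
      (dist2 (-Δ / 2, (i : ℝ) / ((n : ℝ) - 1)) (-Δ / 2, 1 / 2)
        + dist2 (Δ / 2, (i : ℝ) / ((n : ℝ) - 1)) (Δ / 2, 1 / 2))
      = (2/((n:ℝ)-1)^2)*(i:ℝ)^2 + (-2/((n:ℝ)-1))*(i:ℝ) + 1/2 := by
    intro i _
    simp only [dist2]
    field_simp
    ring
  rw [psiV, Finset.sum_congr rfl hstep, sum_quad]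
  field_simp
  ring

lemma psiH_even (Δ : ℝ) {k : ℕ} (hk : 1 ≤ k) :
    psiH Δ (2*k) = (2*(k:ℝ))*Δ^2/2 + (2*(k:ℝ))*((2*(k:ℝ))-2)/(6*((2*(k:ℝ))-1))
      - (2*(k:ℝ))*((2*(k:ℝ))-2)^2/(8*((2*(k:ℝ))-1)^2) := by
  have hk1 : (1:ℝ) ≤ (k:ℝ) := by exact_mod_cast hk
  have hd : (2*(k:ℝ)-1) ≠ 0 := by linarith
  have hd2 : ((k:ℝ)+(k:ℝ)-1) ≠ 0 := by linarith
  rw [psiH, two_mul k, Finset.sum_range_add]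
  have hlow : ∀ i ∈ Finset.range k,
      (let c : ℝ × ℝ :=
        if i < (k + k) / 2 then (0, (((k+k:ℕ) : ℝ) - 2) / (4 * (((k+k:ℕ) : ℝ) - 1)))
        else (0, (3 * ((k+k:ℕ) : ℝ) - 2) / (4 * (((k+k:ℕ) : ℝ) - 1)))
      dist2 (-Δ / 2, (i : ℝ) / (((k+k:ℕ) : ℝ) - 1)) c
        + dist2 (Δ / 2, (i : ℝ) / (((k+k:ℕ) : ℝ) - 1)) c)
      = (2/(2*(k:ℝ)-1)^2)*(i:ℝ)^2 + (-(2*((k:ℝ)-1)/(2*(k:ℝ)-1)^2))*(i:ℝ)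
          + (Δ^2/2 + ((k:ℝ)-1)^2/(2*(2*(k:ℝ)-1)^2)) := by
    intro i hi
    simp only [Finset.mem_range] at hi
    rw [if_pos (by omega : i < (k + k) / 2)]
    simp only [dist2]
    push_cast
    rw [show ((k:ℝ)+(k:ℝ)) = 2*(k:ℝ) by ring]
    field_simp [hd, hd2]
    ring
  have hup : ∀ i ∈ Finset.range k,
      (let c : ℝ × ℝ :=
        if k + i < (k + k) / 2 then (0, (((k+k:ℕ) : ℝ) - 2) / (4 * (((k+k:ℕ) : ℝ) - 1)))
        else (0, (3 * ((k+k:ℕ) : ℝ) - 2) / (4 * (((k+k:ℕ) : ℝ) - 1)))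
      dist2 (-Δ / 2, ((k + i : ℕ) : ℝ) / (((k+k:ℕ) : ℝ) - 1)) c
        + dist2 (Δ / 2, ((k + i : ℕ) : ℝ) / (((k+k:ℕ) : ℝ) - 1)) c)
      = (2/(2*(k:ℝ)-1)^2)*(i:ℝ)^2 + (2*(1-(k:ℝ))/(2*(k:ℝ)-1)^2)*(i:ℝ)
          + (Δ^2/2 + (1-(k:ℝ))^2/(2*(2*(k:ℝ)-1)^2)) := by
    intro i hi
    rw [if_neg (by omega : ¬ (k + i < (k + k) / 2))]
    simp only [dist2]
    push_cast
    rw [show ((k:ℝ)+(k:ℝ)) = 2*(k:ℝ) by ring]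
    field_simp [hd, hd2]
    ring
  rw [Finset.sum_congr rfl hlow, Finset.sum_congr rfl hup, sum_quad, sum_quad]
  field_simp
  ring

lemma psiH_odd (Δ : ℝ) {k : ℕ} (hk : 1 ≤ k) :
    psiH Δ (2*k+1) = (2*(k:ℝ)+1)*Δ^2/2
      + (2*(k:ℝ)+1)*(4*(k:ℝ)^2+4*(k:ℝ)+3)/(96*(k:ℝ)^2) := by
  have hk1 : (1:ℝ) ≤ (k:ℝ) := by exact_mod_cast hk
  have hK : (k:ℝ) ≠ 0 := by linarith
  have hK2 : (k:ℝ)+(k:ℝ) ≠ 0 := by linarith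
  have hK3 : (k:ℝ)+((k:ℝ)+1)-1 ≠ 0 := by linarith
  rw [psiH, show 2*k+1 = k+(k+1) from by omega, Finset.sum_range_add]
  have hlow : ∀ i ∈ Finset.range k,
      (let c : ℝ × ℝ :=
        if i < (k + (k+1)) / 2 then
          (0, (((k+(k+1):ℕ) : ℝ) - 2) / (4 * (((k+(k+1):ℕ) : ℝ) - 1)))
        else (0, (3 * ((k+(k+1):ℕ) : ℝ) - 2) / (4 * (((k+(k+1):ℕ) : ℝ) - 1)))
      dist2 (-Δ / 2, (i : ℝ) / (((k+(k+1):ℕ) : ℝ) - 1)) c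
        + dist2 (Δ / 2, (i : ℝ) / (((k+(k+1):ℕ) : ℝ) - 1)) c)
      = (1/(2*(k:ℝ)^2))*(i:ℝ)^2 + (-((2*(k:ℝ)-1)/(4*(k:ℝ)^2)))*(i:ℝ)
          + (Δ^2/2 + (2*(k:ℝ)-1)^2/(32*(k:ℝ)^2)) := by
    intro i hi
    simp only [Finset.mem_range] at hi
    rw [if_pos (by omega : i < (k + (k+1)) / 2)]
    simp only [dist2]
    push_cast
    field_simp [hK, hK2, hK3]
    ring
  have hup : ∀ i ∈ Finset.range (k+1),
      (let c : ℝ × ℝ :=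
        if k + i < (k + (k+1)) / 2 then
          (0, (((k+(k+1):ℕ) : ℝ) - 2) / (4 * (((k+(k+1):ℕ) : ℝ) - 1)))
        else (0, (3 * ((k+(k+1):ℕ) : ℝ) - 2) / (4 * (((k+(k+1):ℕ) : ℝ) - 1)))
      dist2 (-Δ / 2, ((k + i : ℕ) : ℝ) / (((k+(k+1):ℕ) : ℝ) - 1)) c
        + dist2 (Δ / 2, ((k + i : ℕ) : ℝ) / (((k+(k+1):ℕ) : ℝ) - 1)) c)
      = (1/(2*(k:ℝ)^2))*(i:ℝ)^2 + (-((2*(k:ℝ)+1)/(4*(k:ℝ)^2)))*(i:ℝ)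
          + (Δ^2/2 + (2*(k:ℝ)+1)^2/(32*(k:ℝ)^2)) := by
    intro i hi
    rw [if_neg (by omega : ¬ (k + i < (k + (k+1)) / 2))]
    simp only [dist2]
    push_cast
    field_simp [hK, hK2, hK3]
    ring
  rw [Finset.sum_congr rfl hlow, Finset.sum_congr rfl hup, sum_quad, sum_quad]
  push_cast
  field_simp
  ring

lemma even_odd_tendsto {f : ℕ → ℝ} {l : ℝ}
    (he : Tendsto (fun k => f (2*k)) atTop (nhds l))
    (ho : Tendsto (fun k => f (2*k+1)) atTop (nhds l)) :
    Tendsto f atTop (nhds l) := by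
  have he' : Tendsto f (Filter.map (fun k => 2*k) atTop) (nhds l) := by
    rw [Filter.tendsto_map'_iff]; exact he
  have ho' : Tendsto f (Filter.map (fun k => 2*k+1) atTop) (nhds l) := by
    rw [Filter.tendsto_map'_iff]; exact ho
  have hle : (atTop : Filter ℕ)
      ≤ (Filter.map (fun k => 2*k) atTop) ⊔ (Filter.map (fun k => 2*k+1) atTop) := by
    intro s hs
    rw [Filter.mem_sup, Filter.mem_map, Filter.mem_map] at hs
    obtain ⟨h1, h2⟩ := hs
    rw [mem_atTop_sets] at h1 h2 ⊢
    obtain ⟨N₁, h1⟩ := h1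
    obtain ⟨N₂, h2⟩ := h2
    refine ⟨2*(N₁+N₂)+2, fun n hn => ?_⟩
    rcases Nat.even_or_odd n with ⟨m, hm⟩ | ⟨m, hm⟩
    · have hnm : n = 2*m := by omega
      have := h1 m (by omega)
      simpa [hnm] using this
    · have hnm : n = 2*m+1 := by omega
      have := h2 m (by omega)
      simpa [hnm] using this
  exact (Filter.tendsto_sup.mpr ⟨he', ho'⟩).mono_left hle

lemma psiV_tendsto (Δ : ℝ) :
    Tendsto (fun n : ℕ => psiV Δ n / (2 * n)) atTop (nhds (1 / 12)) := by
  have hx : Tendsto (fun n : ℕ => 1/(n:ℝ)) atTop (nhds 0) :=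
    tendsto_one_div_atTop_nhds_zero_nat
  have hc : ContinuousAt (fun x : ℝ => (2-x)/(6*(1-x)) - 1/4) 0 := by
    apply ContinuousAt.sub
    · exact ContinuousAt.div (by fun_prop) (by fun_prop) (by norm_num)
    · exact continuousAt_const
  have hg : Tendsto (fun x : ℝ => (2-x)/(6*(1-x)) - 1/4) (nhds 0) (nhds (1/12)) := by
    have := hc.tendsto
    norm_num at this
    exact this
  refine Filter.Tendsto.congr' ?_ (hg.comp hx)
  filter_upwards [eventually_ge_atTop 2] with n hn
  show (2-1/(n:ℝ))/(6*(1-1/(n:ℝ))) - 1/4 = psiV Δ n / (2 * n)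
  rw [psiV_eq Δ hn]
  have hn2 : (2:ℝ) ≤ (n:ℝ) := by exact_mod_cast hn
  have hn0 : (n:ℝ) ≠ 0 := by linarith
  have hd : ((n:ℝ)-1) ≠ 0 := by linarith
  field_simp
  ring

lemma psiH_tendsto (Δ : ℝ) :
    Tendsto (fun n : ℕ => psiH Δ n / (2 * n)) atTop (nhds (Δ ^ 2 / 4 + 1 / 48)) := by
  have hx : Tendsto (fun k : ℕ => 1/(k:ℝ)) atTop (nhds 0) :=
    tendsto_one_div_atTop_nhds_zero_nat
  apply even_odd_tendsto
  · -- even subsequence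
    have hc : ContinuousAt (fun x : ℝ =>
        Δ^2/4 + (2-2*x)/(12*(2-x)) - (2-2*x)^2/(16*(2-x)^2)) 0 := by
      apply ContinuousAt.sub
      · apply ContinuousAt.add continuousAt_const
        exact ContinuousAt.div (by fun_prop) (by fun_prop) (by norm_num)
      · exact ContinuousAt.div (by fun_prop) (by fun_prop) (by norm_num)
    have hg : Tendsto (fun x : ℝ =>
        Δ^2/4 + (2-2*x)/(12*(2-x)) - (2-2*x)^2/(16*(2-x)^2)) (nhds 0)
        (nhds (Δ^2/4 + 1/48)) := by
      have := hc.tendsto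
      norm_num at this
      convert this using 2
      norm_num
      ring
    refine Filter.Tendsto.congr' ?_ (hg.comp hx)
    filter_upwards [eventually_ge_atTop 1] with k hk
    show Δ^2/4 + (2-2*(1/(k:ℝ)))/(12*(2-1/(k:ℝ)))
        - (2-2*(1/(k:ℝ)))^2/(16*(2-1/(k:ℝ))^2) = psiH Δ (2*k) / (2 * ((2*k : ℕ) : ℝ))
    rw [psiH_even Δ hk]
    have hk1 : (1:ℝ) ≤ (k:ℝ) := by exact_mod_cast hk
    have hK : (k:ℝ) ≠ 0 := by linarith
    have hd : (2*(k:ℝ)-1) ≠ 0 := by linarith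
    push_cast
    field_simp
    ring
  · -- odd subsequence
    have hc : ContinuousAt (fun x : ℝ => Δ^2/4 + (4+4*x+3*x^2)/192) 0 := by fun_prop
    have hg : Tendsto (fun x : ℝ => Δ^2/4 + (4+4*x+3*x^2)/192) (nhds 0)
        (nhds (Δ^2/4 + 1/48)) := by
      have := hc.tendsto
      norm_num at this
      exact this
    refine Filter.Tendsto.congr' ?_ (hg.comp hx)
    filter_upwards [eventually_ge_atTop 1] with k hk
    show Δ^2/4 + (4+4*(1/(k:ℝ))+3*(1/(k:ℝ))^2)/192
        = psiH Δ (2*k+1) / (2 * ((2*k+1 : ℕ) : ℝ))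
    rw [psiH_odd Δ hk]
    have hk1 : (1:ℝ) ≤ (k:ℝ) := by exact_mod_cast hk
    have hK : (k:ℝ) ≠ 0 := by linarith
    have h2K : (2*(k:ℝ)+1) ≠ 0 := by linarith
    push_cast
    field_simp
    ring

theorem stmt_17 (Δ : ℝ) (hΔ : 0 ≤ Δ) :
    (∀ n : ℕ, 2 ≤ n → Even n →
      psiV Δ n = (n : ℝ) * (2 * n - 1) / (3 * ((n : ℝ) - 1)) - n / 2
      ∧ psiH Δ n = (n : ℝ) * Δ ^ 2 / 2 + (n : ℝ) * ((n : ℝ) - 2) / (6 * ((n : ℝ) - 1))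
          - (n : ℝ) * ((n : ℝ) - 2) ^ 2 / (8 * ((n : ℝ) - 1) ^ 2))
    ∧ Tendsto (fun n : ℕ => psiV Δ n / (2 * n)) atTop (nhds (1 / 12))
    ∧ Tendsto (fun n : ℕ => psiH Δ n / (2 * n)) atTop (nhds (Δ ^ 2 / 4 + 1 / 48))
    ∧ (Δ < 1 / 2 → ∀ᶠ n : ℕ in atTop, psiH Δ n < psiV Δ n) := by
  refine ⟨?_, psiV_tendsto Δ, psiH_tendsto Δ, ?_⟩
  · intro n hn hev
    refine ⟨psiV_eq Δ hn, ?_⟩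
    obtain ⟨k, hk⟩ := hev
    have hnk : n = 2*k := by omega
    subst hnk
    have hk1 : 1 ≤ k := by omega
    rw [psiH_even Δ hk1]
    push_cast
    ring
  · intro hΔ2
    have hlt : Δ^2/4 + 1/48 < 1/12 := by nlinarith
    have hev := (psiH_tendsto Δ).eventually_lt (psiV_tendsto Δ) hlt
    filter_upwards [hev, eventually_ge_atTop 1] with n h1 h2
    have hn1 : (1:ℝ) ≤ (n:ℝ) := by exact_mod_cast h2
    have hpos : (0:ℝ) < 2*(n:ℝ) := by linarith
    have := mul_lt_mul_of_pos_right h1 hpos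
    rwa [div_mul_cancel₀ _ (ne_of_gt hpos), div_mul_cancel₀ _ (ne_of_gt hpos)] at this
end

section
/- Goemans–Williamson certificate implied by the spectral proximity condition: in the two-cluster setting (clusters of size n, N = 2n), if min_{a=1,2} λ₂(L_iso^{(a,a)}) > 2‖D_δ‖ and ‖L_iso‖ ≤ n, then λ₂(D_iso − D_δ − W + (1/2) 1_N 1_Nᵀ) > 0. The proof uses that with g = (1_n, −1_n), diag(g)(L_iso − D_δ − W_δ + (1/2) 1_N 1_Nᵀ) diag(g) = L_iso − D_δ + W_δ + (1/2) g gᵀ, that λ₂(L_iso + (1/2)ggᵀ) = λ₃(L_iso) = min_a λ₂(L_iso^{(a,a)}), and Weyl's inequality together with ‖D_δ − W_δ‖ ≤ 2‖D_δ‖. -/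
open Matrix Finset

/-- The `j`-th smallest eigenvalue (0-indexed) of a Hermitian real matrix,
obtained by sorting the list of its eigenvalues (with multiplicity). -/
noncomputable def kthEig {m : Type*} [Fintype m] [DecidableEq m]
    (A : Matrix m m ℝ) (hA : A.IsHermitian) (j : ℕ) : ℝ :=
  (List.insertionSort (· ≤ ·) (Finset.univ.val.map hA.eigenvalues).toList).getD j 0

open scoped RealInnerProductSpace

set_option linter.unusedSectionVars false
set_option linter.unnecessarySimpa false
set_option maxHeartbeats 1000000

-- positional: sorted list, count of elements ≤ L[k] is ≥ k+1
lemma sorted_count_ge (L : List ℝ) (hs : L.Pairwise (· ≤ ·)) (k : ℕ) (hk : k < L.length) (t : ℝ)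
    (ht : L.get ⟨k, hk⟩ ≤ t) :
    k + 1 ≤ L.countP (fun x => decide (x ≤ t)) := by
  have hsplit : L.countP (fun x => decide (x ≤ t))
      = (L.take (k+1)).countP (fun x => decide (x ≤ t))
        + (L.drop (k+1)).countP (fun x => decide (x ≤ t)) := by
    rw [← List.countP_append, List.take_append_drop]
  have htake : (L.take (k+1)).countP (fun x => decide (x ≤ t)) = k + 1 := by
    rw [List.countP_eq_length.mpr]
    · rw [List.length_take]; omega
    · intro a ha
      rw [List.mem_iff_getElem] at ha
      obtain ⟨i, hi, rfl⟩ := ha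
      have hilen : i < L.length := by
        have := List.length_take (i := k+1) (l := L); omega
      have : (L.take (k+1))[i] = L[i] := List.getElem_take
      rw [this]
      have hik : i ≤ k := by
        have := List.length_take (i := k+1) (l := L)
        rw [List.length_take] at hi; omega
      have : L.get ⟨i, hilen⟩ ≤ L.get ⟨k, hk⟩ := hs.rel_get_of_le (by exact hik)
      simp only [List.get_eq_getElem] at this
      simpa using le_trans this ht
  omega

lemma sorted_count_lt_le (L : List ℝ) (hs : L.Pairwise (· ≤ ·)) (k : ℕ) (hk : k < L.length) (t : ℝ)
    (ht : t ≤ L.get ⟨k, hk⟩) :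
    L.countP (fun x => decide (x < t)) ≤ k := by
  have hsplit : L.countP (fun x => decide (x < t))
      = (L.take k).countP (fun x => decide (x < t))
        + (L.drop k).countP (fun x => decide (x < t)) := by
    rw [← List.countP_append, List.take_append_drop]
  have hdrop : (L.drop k).countP (fun x => decide (x < t)) = 0 := by
    rw [List.countP_eq_zero]
    intro a ha
    rw [List.mem_iff_getElem] at ha
    obtain ⟨i, hi, rfl⟩ := ha
    rw [List.length_drop] at hi
    have hilen : k + i < L.length := by omega
    have : (L.drop k)[i] = L[k + i] := List.getElem_drop
    rw [this]
    have : L.get ⟨k, hk⟩ ≤ L.get ⟨k + i, hilen⟩ := hs.rel_get_of_le (by simp)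
    simp only [List.get_eq_getElem] at this
    simp only [decide_eq_true_eq, not_lt]
    exact le_trans ht this
  have htake : (L.take k).countP (fun x => decide (x < t)) ≤ k := by
    calc (L.take k).countP _ ≤ (L.take k).length := List.countP_le_length
    _ ≤ k := by rw [List.length_take]; omega
  omega


variable {m : Type*} [Fintype m] [DecidableEq m]

section
variable (A : Matrix m m ℝ) (hA : A.IsHermitian)

noncomputable def evL : List ℝ :=
  List.insertionSort (· ≤ ·) (Finset.univ.val.map hA.eigenvalues).toList

lemma evL_sorted : (evL A hA).Pairwise (· ≤ ·) := List.pairwise_insertionSort _ _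

lemma evL_length : (evL A hA).length = Fintype.card m := by
  rw [evL, (List.perm_insertionSort _ _).length_eq, Multiset.length_toList,
    Multiset.card_map]
  rfl

lemma evL_countP (p : ℝ → Prop) [DecidablePred p] :
    (evL A hA).countP (fun x => decide (p x))
      = (Finset.univ.filter (fun i => p (hA.eigenvalues i))).card := by
  rw [evL, (List.perm_insertionSort (· ≤ ·) _).countP_eq]
  have h1 : ((Finset.univ.val.map hA.eigenvalues).toList).countP (fun x => decide (p x))
      = Multiset.countP p (Finset.univ.val.map hA.eigenvalues) := by
    rw [← Multiset.coe_countP, Multiset.coe_toList]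
  rw [h1, Multiset.countP_map]
  rfl

lemma kthEig_eq_get (j : ℕ) (hj : j < Fintype.card m) :
    kthEig A hA j = (evL A hA).get ⟨j, by rw [evL_length]; exact hj⟩ := by
  have hlen : j < (evL A hA).length := by rw [evL_length]; exact hj
  rw [kthEig, List.getD_eq_getElem?_getD]
  rw [show (List.insertionSort (· ≤ ·) (Finset.univ.val.map hA.eigenvalues).toList) = evL A hA from rfl]
  rw [List.getElem?_eq_getElem hlen]
  rfl

lemma kthEig_mem (j : ℕ) (hj : j < Fintype.card m) :
    ∃ i, hA.eigenvalues i = kthEig A hA j := by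
  rw [kthEig_eq_get A hA j hj]
  set v := (evL A hA).get ⟨j, by rw [evL_length]; exact hj⟩ with hv
  have hmem : v ∈ evL A hA := List.get_mem _ _
  have hmem2 : v ∈ (Finset.univ.val.map hA.eigenvalues).toList :=
    ((List.perm_insertionSort (· ≤ ·) ((Finset.univ.val.map hA.eigenvalues).toList)).mem_iff).mp hmem
  rw [Multiset.mem_toList, Multiset.mem_map] at hmem2
  obtain ⟨i, _, hi⟩ := hmem2
  exact ⟨i, hi⟩

lemma exists_two_le (hcard : 1 < Fintype.card m) (t : ℝ) (h : kthEig A hA 1 ≤ t) :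
    ∃ i j, i ≠ j ∧ hA.eigenvalues i ≤ t ∧ hA.eigenvalues j ≤ t := by
  have hk : (1 : ℕ) < (evL A hA).length := by rw [evL_length]; exact hcard
  have hcount := sorted_count_ge (evL A hA) (evL_sorted A hA) 1 hk t
    (by rw [← kthEig_eq_get A hA 1 hcard]; exact h)
  rw [evL_countP A hA (fun x => x ≤ t)] at hcount
  have h2 : 1 < (Finset.univ.filter (fun i => hA.eigenvalues i ≤ t)).card := hcount
  obtain ⟨i, hi, j, hj, hij⟩ := Finset.one_lt_card.mp h2
  simp only [Finset.mem_filter] at hi hj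
  exact ⟨i, j, hij, hi.2, hj.2⟩

lemma at_most_one_lt {i j : m} (hij : i ≠ j)
    (hi : hA.eigenvalues i < kthEig A hA 1) (hj : hA.eigenvalues j < kthEig A hA 1) : False := by
  have hcard : 1 < Fintype.card m := Fintype.one_lt_card_iff_nontrivial.mpr ⟨⟨i, j, hij⟩⟩
  have hk : (1 : ℕ) < (evL A hA).length := by rw [evL_length]; exact hcard
  have hcount := sorted_count_lt_le (evL A hA) (evL_sorted A hA) 1 hk (kthEig A hA 1)
    (le_of_eq (kthEig_eq_get A hA 1 hcard))
  rw [evL_countP A hA (fun x => x < kthEig A hA 1)] at hcount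
  have h2 : 1 < (Finset.univ.filter (fun k => hA.eigenvalues k < kthEig A hA 1)).card := by
    apply Finset.one_lt_card.mpr
    exact ⟨i, by simp [hi], j, by simp [hj], hij⟩
  omega
end
lemma dot_eq_inner (x y : EuclideanSpace ℝ m) : ⟪x, y⟫ = (x : m → ℝ) ⬝ᵥ (y : m → ℝ) := by
  simp [PiLp.inner_apply, dotProduct, mul_comm]

lemma evec_inner (A : Matrix m m ℝ) (hA : A.IsHermitian) (x : EuclideanSpace ℝ m) (i : m) :
    ⟪hA.eigenvectorBasis i, ((WithLp.equiv 2 (m → ℝ)).symm (A.mulVec x))⟫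
      = hA.eigenvalues i * ⟪hA.eigenvectorBasis i, x⟫ := by
  have hs := (Matrix.isHermitian_iff_isSymmetric.mp hA)
  have h1 : ((WithLp.equiv 2 (m → ℝ)).symm (A.mulVec x)) = Matrix.toEuclideanLin A x := by
    simp [Matrix.toEuclideanLin_apply]
  rw [h1, ← hs (hA.eigenvectorBasis i) x]
  have h2 : Matrix.toEuclideanLin A (hA.eigenvectorBasis i)
      = hA.eigenvalues i • hA.eigenvectorBasis i := by
    apply (WithLp.equiv 2 (m → ℝ)).injective
    simpa [Matrix.toEuclideanLin_apply] using hA.mulVec_eigenvectorBasis i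
  rw [h2, inner_smul_left]
  simp

/-- Quadratic form in the eigenbasis. -/
lemma quad_eq_sum (A : Matrix m m ℝ) (hA : A.IsHermitian) (x : m → ℝ) :
    x ⬝ᵥ A.mulVec x
      = ∑ i, hA.eigenvalues i * (⇑(hA.eigenvectorBasis i) ⬝ᵥ x)^2 := by
  set x' : EuclideanSpace ℝ m := (WithLp.equiv 2 (m → ℝ)).symm x with hx'
  set y' : EuclideanSpace ℝ m := (WithLp.equiv 2 (m → ℝ)).symm (A.mulVec x) with hy'
  have this1 := (hA.eigenvectorBasis).sum_inner_mul_inner x' y'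
  have e1 : x ⬝ᵥ A.mulVec x = ⟪x', y'⟫ := (dot_eq_inner x' y').symm
  rw [e1, ← this1]
  refine Finset.sum_congr rfl (fun i _ => ?_)
  have e2 : ⟪hA.eigenvectorBasis i, y'⟫ = hA.eigenvalues i * ⟪hA.eigenvectorBasis i, x'⟫ :=
    evec_inner A hA x' i
  have e3 : ⟪hA.eigenvectorBasis i, x'⟫ = ⇑(hA.eigenvectorBasis i) ⬝ᵥ x :=
    dot_eq_inner (hA.eigenvectorBasis i) x'
  have e4 : ⟪x', hA.eigenvectorBasis i⟫ = ⟪hA.eigenvectorBasis i, x'⟫ := real_inner_comm _ _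
  rw [e2, e4, e3]; ring

lemma dot_eq_sum (A : Matrix m m ℝ) (hA : A.IsHermitian) (x y : m → ℝ) :
    x ⬝ᵥ y = ∑ i, (⇑(hA.eigenvectorBasis i) ⬝ᵥ x) * (⇑(hA.eigenvectorBasis i) ⬝ᵥ y) := by
  set x' : EuclideanSpace ℝ m := (WithLp.equiv 2 (m → ℝ)).symm x with hx'
  set y' : EuclideanSpace ℝ m := (WithLp.equiv 2 (m → ℝ)).symm y with hy'
  have this1 := (hA.eigenvectorBasis).sum_inner_mul_inner x' y'
  have e1 : x ⬝ᵥ y = ⟪x', y'⟫ := (dot_eq_inner x' y').symm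
  rw [e1, ← this1]
  refine Finset.sum_congr rfl (fun i _ => ?_)
  have e3 : ⟪hA.eigenvectorBasis i, x'⟫ = ⇑(hA.eigenvectorBasis i) ⬝ᵥ x :=
    dot_eq_inner (hA.eigenvectorBasis i) x'
  have e5 : ⟪hA.eigenvectorBasis i, y'⟫ = ⇑(hA.eigenvectorBasis i) ⬝ᵥ y :=
    dot_eq_inner (hA.eigenvectorBasis i) y'
  have e4 : ⟪x', hA.eigenvectorBasis i⟫ = ⟪hA.eigenvectorBasis i, x'⟫ := real_inner_comm _ _
  rw [e4, e3, e5]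
lemma unorm (A : Matrix m m ℝ) (hA : A.IsHermitian) (i j : m) :
    ⇑(hA.eigenvectorBasis i) ⬝ᵥ ⇑(hA.eigenvectorBasis j) = if i = j then (1:ℝ) else 0 := by
  have h0 := (hA.eigenvectorBasis).orthonormal
  rw [orthonormal_iff_ite] at h0
  have h := h0 i j
  have h2 : ⟪hA.eigenvectorBasis i, hA.eigenvectorBasis j⟫
      = ⇑(hA.eigenvectorBasis i) ⬝ᵥ ⇑(hA.eigenvectorBasis j) := dot_eq_inner _ _
  rw [h2] at h
  simpa using h

lemma herm_dot (A : Matrix m m ℝ) (hA : A.IsHermitian) (x y : m → ℝ) :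
    (A.mulVec x) ⬝ᵥ y = x ⬝ᵥ (A.mulVec y) := by
  have ht : Aᵀ = A := by
    have := hA.eq
    rwa [Matrix.conjTranspose_eq_transpose_of_trivial] at this
  rw [Matrix.dotProduct_mulVec, ← Matrix.mulVec_transpose, ht]
lemma eig_diag (A : Matrix m m ℝ) (hA : A.IsHermitian) (i : m) :
    ⇑(hA.eigenvectorBasis i) ⬝ᵥ A.mulVec ⇑(hA.eigenvectorBasis i) = hA.eigenvalues i := by
  rw [hA.mulVec_eigenvectorBasis, dotProduct_smul]
  simp [unorm A hA i i]

lemma kthEig_le_of_bound (A : Matrix m m ℝ) (hA : A.IsHermitian) (r : ℝ)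
    (hb : ∀ v : m → ℝ, v ⬝ᵥ A.mulVec v ≤ r * (v ⬝ᵥ v)) (j : ℕ) (hj : j < Fintype.card m) :
    kthEig A hA j ≤ r := by
  obtain ⟨i, hi⟩ := kthEig_mem A hA j hj
  rw [← hi, ← eig_diag A hA i]
  calc ⇑(hA.eigenvectorBasis i) ⬝ᵥ A.mulVec ⇑(hA.eigenvectorBasis i)
      ≤ r * (⇑(hA.eigenvectorBasis i) ⬝ᵥ ⇑(hA.eigenvectorBasis i)) := hb _
    _ = r := by simp [unorm A hA i i]

/-- Spectral gap lemma: if `A` is PSD with `A g = 0` and second eigenvalue `μ > 0`,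
then the quadratic form is `≥ μ` on the orthogonal complement of `g`. -/
lemma gap_lemma (A : Matrix m m ℝ) (hA : A.IsHermitian)
    (hpsd : ∀ v : m → ℝ, 0 ≤ v ⬝ᵥ A.mulVec v)
    (g : m → ℝ) (hg : g ≠ 0) (hAg : A.mulVec g = 0)
    (hμ : 0 < kthEig A hA 1)
    (x : m → ℝ) (hx : g ⬝ᵥ x = 0) :
    kthEig A hA 1 * (x ⬝ᵥ x) ≤ x ⬝ᵥ A.mulVec x := by
  set μ := kthEig A hA 1 with hμdef
  set u : m → (m → ℝ) := fun i => ⇑(hA.eigenvectorBasis i) with hu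
  set lam := hA.eigenvalues with hlam
  set c : m → ℝ := fun i => u i ⬝ᵥ x with hc
  set d : m → ℝ := fun i => u i ⬝ᵥ g with hd
  -- eigenvalues nonneg
  have hlamnn : ∀ i, 0 ≤ lam i := fun i => by
    rw [hlam, ← eig_diag A hA i]; exact hpsd _
  -- lam i * d i = 0
  have hld : ∀ i, lam i * d i = 0 := by
    intro i
    have h1 : (A.mulVec (u i)) ⬝ᵥ g = u i ⬝ᵥ (A.mulVec g) := herm_dot A hA _ _
    rw [hAg] at h1
    simp only [dotProduct_zero] at h1
    have h2 : A.mulVec (u i) = lam i • u i := hA.mulVec_eigenvectorBasis i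
    rw [h2, smul_dotProduct] at h1
    simpa using h1
  -- some i0 with d i0 ≠ 0
  have hex : ∃ i0, d i0 ≠ 0 := by
    by_contra h
    push_neg at h
    apply hg
    have hgg : g ⬝ᵥ g = ∑ i, d i * d i := dot_eq_sum A hA g g
    rw [Finset.sum_eq_zero (fun i _ => by rw [h i]; ring)] at hgg
    exact (dotProduct_self_eq_zero).mp hgg
  obtain ⟨i0, hi0⟩ := hex
  have hlam0 : lam i0 = 0 := by
    have := hld i0
    rcases mul_eq_zero.mp this with h | h
    · exact h
    · exact absurd h hi0
  -- all other eigenvalues ≥ μ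
  have hge : ∀ j, j ≠ i0 → μ ≤ lam j := by
    intro j hj
    by_contra hlt
    push_neg at hlt
    exact at_most_one_lt A hA hj hlt (show lam i0 < μ by rw [hlam0]; exact hμ)
  -- d j = 0 for j ≠ i0
  have hdz : ∀ j, j ≠ i0 → d j = 0 := by
    intro j hj
    have := hld j
    rcases mul_eq_zero.mp this with h | h
    · exact absurd h (by have := hge j hj; intro hz; rw [hz] at this; linarith)
    · exact h
  -- c i0 = 0
  have hc0 : c i0 = 0 := by
    have hgx : g ⬝ᵥ x = ∑ i, d i * c i := dot_eq_sum A hA g x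
    rw [hx] at hgx
    have : ∑ i, d i * c i = d i0 * c i0 := by
      rw [Finset.sum_eq_single i0]
      · intro b _ hb; rw [hdz b hb]; ring
      · intro h; exact absurd (Finset.mem_univ i0) h
    rw [this] at hgx
    rcases mul_eq_zero.mp hgx.symm with h | h
    · exact absurd h hi0
    · exact h
  rw [quad_eq_sum A hA x]
  have hxx : x ⬝ᵥ x = ∑ i, c i * c i := dot_eq_sum A hA x x
  rw [hxx, Finset.mul_sum]
  apply Finset.sum_le_sum
  intro i _
  by_cases hi : i = i0
  · have h0 : (0:ℝ) ≤ lam i * (u i ⬝ᵥ x)^2 := mul_nonneg (hlamnn i) (sq_nonneg _)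
    rw [hi, hc0]
    simpa [hi] using h0
  · have h1 : μ ≤ lam i := hge i hi
    have h2 : (0:ℝ) ≤ c i * c i := mul_self_nonneg _
    calc μ * (c i * c i) ≤ lam i * (c i * c i) := by nlinarith
      _ = lam i * (u i ⬝ᵥ x)^2 := by rw [hc]; ring
/-- If the quadratic form is positive on the complement of some vector `g`,
then the second-smallest eigenvalue is positive. -/
lemma second_eig_pos (M : Matrix m m ℝ) (hM : M.IsHermitian)
    (hcard : 1 < Fintype.card m) (g : m → ℝ)
    (hpos : ∀ v : m → ℝ, v ≠ 0 → g ⬝ᵥ v = 0 → 0 < v ⬝ᵥ M.mulVec v) :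
    0 < kthEig M hM 1 := by
  by_contra hle
  push_neg at hle
  obtain ⟨i, j, hij, hi, hj⟩ := exists_two_le M hM hcard 0 hle
  set u : m → (m → ℝ) := fun k => ⇑(hM.eigenvectorBasis k) with hu
  set lam := hM.eigenvalues with hlam
  have huu : ∀ k l, u k ⬝ᵥ u l = if k = l then (1:ℝ) else 0 := fun k l => unorm M hM k l
  have hmvi : M.mulVec (u i) = lam i • u i := hM.mulVec_eigenvectorBasis i
  have hmvj : M.mulVec (u j) = lam j • u j := hM.mulVec_eigenvectorBasis j
  set a : ℝ := g ⬝ᵥ u j with ha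
  set b : ℝ := g ⬝ᵥ u i with hb
  by_cases hbz : b = 0
  · -- v = u i works
    have hune : u i ≠ 0 := by
      intro h
      have h1 := huu i i
      rw [h, if_pos rfl] at h1
      simpa using h1
    have h1 := hpos (u i) hune hbz
    rw [hmvi, dotProduct_smul, smul_eq_mul, huu i i, if_pos rfl] at h1
    rw [mul_one] at h1
    linarith
  · set v : m → ℝ := a • u i - b • u j with hv
    have hgv : g ⬝ᵥ v = 0 := by
      rw [hv, dotProduct_sub, dotProduct_smul, dotProduct_smul, ← ha, ← hb]
      simp [mul_comm]
    have hvv : v ⬝ᵥ v = a^2 + b^2 := by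
      rw [hv]
      simp only [sub_dotProduct, dotProduct_sub, smul_dotProduct, dotProduct_smul,
        huu i i, huu j j, huu i j, huu j i, smul_eq_mul]
      rw [if_neg hij, if_neg (Ne.symm hij)]; norm_num; try ring
    have hvne : v ≠ 0 := by
      intro h
      rw [h] at hvv
      simp only [zero_dotProduct] at hvv
      exact hbz (by nlinarith [sq_nonneg a, sq_nonneg b])
    have hquad : v ⬝ᵥ M.mulVec v = a^2 * lam i + b^2 * lam j := by
      rw [hv, Matrix.mulVec_sub, Matrix.mulVec_smul, Matrix.mulVec_smul, hmvi, hmvj]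
      simp only [sub_dotProduct, dotProduct_sub, smul_dotProduct, dotProduct_smul,
        smul_eq_mul, huu i i, huu j j, huu i j, huu j i]
      rw [if_neg hij, if_neg (Ne.symm hij)]; norm_num; try ring
    have := hpos v hvne hgv
    rw [hquad] at this
    nlinarith [sq_nonneg a, sq_nonneg b]
lemma quadform_sum {ι : Type*} [Fintype ι] (A : Matrix ι ι ℝ) (x : ι → ℝ) :
    x ⬝ᵥ A.mulVec x = ∑ i, ∑ j, x i * (A i j * x j) := by
  simp [dotProduct, Matrix.mulVec, Finset.mul_sum]

lemma lap_quad {ι : Type*} [Fintype ι] [DecidableEq ι] (A : Matrix ι ι ℝ) (x : ι → ℝ) :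
    x ⬝ᵥ (Matrix.diagonal (fun i => ∑ j, A i j) - A).mulVec x
      = (∑ i, (∑ j, A i j) * x i ^ 2) - ∑ i, ∑ j, x i * (A i j * x j) := by
  rw [Matrix.sub_mulVec, dotProduct_sub]
  congr 1
  · rw [quadform_sum]
    apply Finset.sum_congr rfl; intro i _
    rw [Finset.sum_eq_single i]
    · rw [Matrix.diagonal_apply_eq]; ring
    · intro b _ hb
      rw [Matrix.diagonal_apply_ne _ (Ne.symm hb)]; ring
    · intro h; exact absurd (Finset.mem_univ i) h
  · exact quadform_sum A x

lemma cross_le {ι : Type*} [Fintype ι] (A : Matrix ι ι ℝ)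
    (hs : ∀ i j, A i j = A j i) (hnn : ∀ i j, 0 ≤ A i j) (x : ι → ℝ) :
    |∑ i, ∑ j, x i * (A i j * x j)| ≤ ∑ i, (∑ j, A i j) * x i ^ 2 := by
  have h1 : ∀ i j, |x i * (A i j * x j)| ≤ A i j * (x i ^2 + x j ^2) / 2 := by
    intro i j
    rw [abs_le]
    constructor <;> nlinarith [hnn i j, sq_nonneg (x i - x j), sq_nonneg (x i + x j)]
  calc |∑ i, ∑ j, x i * (A i j * x j)| ≤ ∑ i, |∑ j, x i * (A i j * x j)| :=
        Finset.abs_sum_le_sum_abs _ _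
    _ ≤ ∑ i, ∑ j, |x i * (A i j * x j)| :=
        Finset.sum_le_sum (fun i _ => Finset.abs_sum_le_sum_abs _ _)
    _ ≤ ∑ i, ∑ j, A i j * (x i ^2 + x j ^2) / 2 :=
        Finset.sum_le_sum (fun i _ => Finset.sum_le_sum (fun j _ => h1 i j))
    _ = ∑ i, (∑ j, A i j) * x i ^ 2 := by
        have hsplit : ∀ i j : ι, A i j * (x i ^2 + x j ^2) / 2
            = A i j * x i^2 / 2 + A i j * x j ^2 /2 := fun i j => by ring
        simp_rw [hsplit, Finset.sum_add_distrib]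
        have hpart1 : ∑ i, ∑ j, A i j * x i ^2 / 2 = ∑ i, (∑ j, A i j) * x i ^2 / 2 := by
          apply Finset.sum_congr rfl; intro i _
          rw [Finset.sum_mul, Finset.sum_div]
        have hpart2 : ∑ i, ∑ j, A i j * x j ^2 / 2 = ∑ j, (∑ i, A j i) * x j ^2 / 2 := by
          rw [Finset.sum_comm]
          apply Finset.sum_congr rfl; intro j _
          rw [Finset.sum_mul, Finset.sum_div]
          apply Finset.sum_congr rfl; intro i _
          rw [hs i j]
        rw [hpart1, hpart2, ← Finset.sum_add_distrib]
        apply Finset.sum_congr rfl; intro i _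
        ring

lemma lap_psd {ι : Type*} [Fintype ι] [DecidableEq ι] (A : Matrix ι ι ℝ)
    (hs : ∀ i j, A i j = A j i) (hnn : ∀ i j, 0 ≤ A i j) (x : ι → ℝ) :
    0 ≤ x ⬝ᵥ (Matrix.diagonal (fun i => ∑ j, A i j) - A).mulVec x := by
  rw [lap_quad]
  have := cross_le A hs hnn x
  have h2 := abs_le.mp this
  linarith [h2.2]

lemma lap_upper {ι : Type*} [Fintype ι] [DecidableEq ι] (A : Matrix ι ι ℝ)
    (hs : ∀ i j, A i j = A j i) (hnn : ∀ i j, 0 ≤ A i j) (r : ℝ)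
    (hr : ∀ i, ∑ j, A i j ≤ r) (x : ι → ℝ) :
    x ⬝ᵥ (Matrix.diagonal (fun i => ∑ j, A i j) - A).mulVec x ≤ 2 * r * (x ⬝ᵥ x) := by
  rw [lap_quad]
  have := (abs_le.mp (cross_le A hs hnn x)).1
  have hsum : ∑ i, (∑ j, A i j) * x i ^ 2 ≤ r * (x ⬝ᵥ x) := by
    rw [dotProduct, Finset.mul_sum]
    apply Finset.sum_le_sum
    intro i _
    have := hr i
    nlinarith [sq_nonneg (x i)]
  linarith

theorem stmt_19 {n : ℕ} (hn : 0 < n)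
    (W : Matrix (Fin n ⊕ Fin n) (Fin n ⊕ Fin n) ℝ)
    (hsym : W.IsSymm) (hnn : ∀ i j, 0 ≤ W i j)
    (Wiso Wδ : Matrix (Fin n ⊕ Fin n) (Fin n ⊕ Fin n) ℝ)
    (hWiso : ∀ i j, Wiso i j = if i.isLeft = j.isLeft then W i j else 0)
    (hWδ : Wδ = W - Wiso)
    (Liso : Matrix (Fin n ⊕ Fin n) (Fin n ⊕ Fin n) ℝ)
    (hLiso : Liso = Matrix.diagonal (fun i => ∑ j, Wiso i j) - Wiso)
    (B1 B2 : Matrix (Fin n) (Fin n) ℝ)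
    (hB1 : ∀ i j, B1 i j = Liso (Sum.inl i) (Sum.inl j))
    (hB2 : ∀ i j, B2 i j = Liso (Sum.inr i) (Sum.inr j))
    (hH1 : B1.IsHermitian) (hH2 : B2.IsHermitian)
    (Dmax : ℝ)
    (hDmax : Dmax = Finset.univ.sup'
        (Finset.univ_nonempty_iff.mpr ⟨Sum.inl ⟨0, hn⟩⟩) (fun i => ∑ j, Wδ i j))
    -- min_{a=1,2} λ₂(L_iso^{(a,a)}) > 2‖D_δ‖
    (hgap : 2 * Dmax < min (kthEig B1 hH1 1) (kthEig B2 hH2 1))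
    -- ‖L_iso‖ ≤ n (as a bound on the quadratic form of the PSD matrix L_iso)
    (hnorm : ∀ v : Fin n ⊕ Fin n → ℝ, v ⬝ᵥ Liso.mulVec v ≤ (n : ℝ) * (v ⬝ᵥ v))
    (M : Matrix (Fin n ⊕ Fin n) (Fin n ⊕ Fin n) ℝ)
    (hM : M = Matrix.diagonal (fun i => ∑ j, Wiso i j)
        - Matrix.diagonal (fun i => ∑ j, Wδ i j) - W
        + (1 / 2 : ℝ) • Matrix.of (fun _ _ => (1 : ℝ)))
    (hMH : M.IsHermitian) :
    0 < kthEig M hMH 1 := by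
  classical
  -- symmetry and sign facts
  have hWsymm : ∀ i j, W i j = W j i := by
    intro i j
    have := congrFun (congrFun hsym j) i
    rwa [Matrix.transpose_apply] at this
  have hWδ' : ∀ i j, Wδ i j = if i.isLeft = j.isLeft then 0 else W i j := by
    intro i j
    rw [hWδ, Matrix.sub_apply, hWiso i j]
    by_cases h : i.isLeft = j.isLeft <;> simp [h]
  have hWisosymm : ∀ i j, Wiso i j = Wiso j i := by
    intro i j
    rw [hWiso, hWiso]
    by_cases h : i.isLeft = j.isLeft
    · rw [if_pos h, if_pos h.symm, hWsymm]
    · rw [if_neg h, if_neg (fun hh => h hh.symm)]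
  have hWδsymm : ∀ i j, Wδ i j = Wδ j i := by
    intro i j
    rw [hWδ', hWδ']
    by_cases h : i.isLeft = j.isLeft
    · rw [if_pos h, if_pos h.symm]
    · rw [if_neg h, if_neg (fun hh => h hh.symm), hWsymm]
  have hWisonn : ∀ i j, 0 ≤ Wiso i j := by
    intro i j; rw [hWiso]; by_cases h : i.isLeft = j.isLeft <;> simp [h, hnn]
  have hWδnn : ∀ i j, 0 ≤ Wδ i j := by
    intro i j; rw [hWδ']; by_cases h : i.isLeft = j.isLeft <;> simp [h, hnn]
  have hdδnn : ∀ i, 0 ≤ ∑ j, Wδ i j := fun i => Finset.sum_nonneg (fun j _ => hWδnn i j)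
  have hdδle : ∀ i, ∑ j, Wδ i j ≤ Dmax := by
    intro i; rw [hDmax]; exact Finset.le_sup' (fun i => ∑ j, Wδ i j) (Finset.mem_univ i)
  have hDmax0 : 0 ≤ Dmax := le_trans (hdδnn (Sum.inl ⟨0, hn⟩)) (hdδle _)
  -- the sign vector
  set s : Fin n ⊕ Fin n → ℝ := Sum.elim (fun _ => 1) (fun _ => -1) with hs_def
  have hss : ∀ i, s i * s i = 1 := by rintro (a | a) <;> norm_num [hs_def]
  have hsum_s : ∑ i, s i = 0 := by
    rw [Fintype.sum_sum_type]
    simp [hs_def]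
  have hs_dot : s ⬝ᵥ s = 2 * n := by
    rw [dotProduct]
    rw [Finset.sum_congr rfl (fun i _ => hss i), Finset.sum_const, Finset.card_univ]
    simp [Fintype.card_sum]
    ring
  -- eigenvalue bound setup
  set μ : ℝ := min (kthEig B1 hH1 1) (kthEig B2 hH2 1) with hμ_def
  have hμpos : 0 < μ := lt_of_le_of_lt (by linarith) hgap
  -- rule out n = 1
  rcases Nat.lt_or_ge n 2 with hn1 | hn2
  · exfalso
    have hnn1 : n = 1 := by omega
    have hlen : (evL B1 hH1).length = 1 := by rw [evL_length]; simp [hnn1]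
    have : kthEig B1 hH1 1 = 0 := by
      rw [show kthEig B1 hH1 1 = (evL B1 hH1).getD 1 0 from rfl]
      rw [List.getD_eq_default]
      omega
    have h2 : μ ≤ 0 := le_trans (min_le_left _ _) (le_of_eq this)
    linarith
  -- cross-block entries of Liso vanish
  have hcrossW1 : ∀ (a b : Fin n), Wiso (Sum.inl a) (Sum.inr b) = 0 := by
    intro a b; rw [hWiso]; simp
  have hcrossW2 : ∀ (a b : Fin n), Wiso (Sum.inr a) (Sum.inl b) = 0 := by
    intro a b; rw [hWiso]; simp
  have hcrossL1 : ∀ (a b : Fin n), Liso (Sum.inl a) (Sum.inr b) = 0 := by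
    intro a b; rw [hLiso]
    simp [Matrix.sub_apply, Matrix.diagonal_apply_ne, hcrossW1]
  have hcrossL2 : ∀ (a b : Fin n), Liso (Sum.inr a) (Sum.inl b) = 0 := by
    intro a b; rw [hLiso]
    simp [Matrix.sub_apply, Matrix.diagonal_apply_ne, hcrossW2]
  have hrowL : ∀ i, ∑ j, Liso i j = 0 := by
    intro i
    rw [hLiso]
    simp only [Matrix.sub_apply]
    rw [Finset.sum_sub_distrib]
    rw [Finset.sum_eq_single i (fun b _ hb => Matrix.diagonal_apply_ne _ (Ne.symm hb))
      (fun h => absurd (Finset.mem_univ i) h)]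
    rw [Matrix.diagonal_apply_eq]
    ring
  have hLisoH : Liso.IsHermitian := by
    rw [Matrix.IsHermitian, Matrix.conjTranspose]
    ext i j
    simp only [Matrix.map_apply, Matrix.transpose_apply, star_trivial]
    rw [hLiso]
    simp only [Matrix.sub_apply]
    rw [hWisosymm j i, Matrix.diagonal_apply, Matrix.diagonal_apply]
    by_cases h : i = j
    · subst h; simp
    · rw [if_neg h, if_neg (Ne.symm h)]
  -- block decomposition of the Liso quadratic form
  have hblock : ∀ y : Fin n ⊕ Fin n → ℝ, y ⬝ᵥ Liso.mulVec y
      = (fun a => y (Sum.inl a)) ⬝ᵥ B1.mulVec (fun a => y (Sum.inl a))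
        + (fun a => y (Sum.inr a)) ⬝ᵥ B2.mulVec (fun a => y (Sum.inr a)) := by
    intro y
    rw [quadform_sum, quadform_sum, quadform_sum, Fintype.sum_sum_type]
    congr 1
    · apply Finset.sum_congr rfl; intro a _
      rw [Fintype.sum_sum_type]
      have h0 : ∑ b, y (Sum.inl a) * (Liso (Sum.inl a) (Sum.inr b) * y (Sum.inr b)) = 0 :=
        Finset.sum_eq_zero (fun b _ => by rw [hcrossL1]; ring)
      rw [h0, add_zero]
      apply Finset.sum_congr rfl; intro b _
      rw [hB1]
    · apply Finset.sum_congr rfl; intro a _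
      rw [Fintype.sum_sum_type]
      have h0 : ∑ b, y (Sum.inr a) * (Liso (Sum.inr a) (Sum.inl b) * y (Sum.inl b)) = 0 :=
        Finset.sum_eq_zero (fun b _ => by rw [hcrossL2]; ring)
      rw [h0, zero_add]
      apply Finset.sum_congr rfl; intro b _
      rw [hB2]
  -- B1, B2 are Laplacians of the diagonal blocks
  set A1 : Matrix (Fin n) (Fin n) ℝ := Matrix.of (fun a b => Wiso (Sum.inl a) (Sum.inl b)) with hA1
  set A2 : Matrix (Fin n) (Fin n) ℝ := Matrix.of (fun a b => Wiso (Sum.inr a) (Sum.inr b)) with hA2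
  have hrow1 : ∀ a, (∑ j, Wiso (Sum.inl a) j) = ∑ b, A1 a b := by
    intro a; rw [Fintype.sum_sum_type]
    simp [hA1, hcrossW1]
  have hrow2 : ∀ a, (∑ j, Wiso (Sum.inr a) j) = ∑ b, A2 a b := by
    intro a; rw [Fintype.sum_sum_type]
    simp [hA2, hcrossW2]
  have hB1eq : B1 = Matrix.diagonal (fun a => ∑ b, A1 a b) - A1 := by
    ext a b
    rw [hB1, hLiso]
    simp only [Matrix.sub_apply]
    by_cases h : a = b
    · subst h
      rw [Matrix.diagonal_apply_eq, Matrix.diagonal_apply_eq, hrow1]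
      rfl
    · rw [Matrix.diagonal_apply_ne _ h,
        Matrix.diagonal_apply_ne _ (fun hh => h (Sum.inl_injective hh))]
      rfl
  have hB2eq : B2 = Matrix.diagonal (fun a => ∑ b, A2 a b) - A2 := by
    ext a b
    rw [hB2, hLiso]
    simp only [Matrix.sub_apply]
    by_cases h : a = b
    · subst h
      rw [Matrix.diagonal_apply_eq, Matrix.diagonal_apply_eq, hrow2]
      rfl
    · rw [Matrix.diagonal_apply_ne _ h,
        Matrix.diagonal_apply_ne _ (fun hh => h (Sum.inr_injective hh))]
      rfl
  have hA1symm : ∀ a b, A1 a b = A1 b a := fun a b => hWisosymm _ _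
  have hA2symm : ∀ a b, A2 a b = A2 b a := fun a b => hWisosymm _ _
  have hA1nn : ∀ a b, 0 ≤ A1 a b := fun a b => hWisonn _ _
  have hA2nn : ∀ a b, 0 ≤ A2 a b := fun a b => hWisonn _ _
  have hB1psd : ∀ x : Fin n → ℝ, 0 ≤ x ⬝ᵥ B1.mulVec x := by
    intro x; rw [hB1eq]; exact lap_psd A1 hA1symm hA1nn x
  have hB2psd : ∀ x : Fin n → ℝ, 0 ≤ x ⬝ᵥ B2.mulVec x := by
    intro x; rw [hB2eq]; exact lap_psd A2 hA2symm hA2nn x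
  have hB1ones : B1.mulVec (fun _ => 1) = 0 := by
    funext a
    rw [hB1eq, Matrix.mulVec, dotProduct]
    simp only [Matrix.sub_apply, mul_one]
    rw [Finset.sum_sub_distrib]
    rw [Finset.sum_eq_single a (fun b _ hb => Matrix.diagonal_apply_ne _ (Ne.symm hb))
      (fun h => absurd (Finset.mem_univ a) h), Matrix.diagonal_apply_eq]
    simp
  have hB2ones : B2.mulVec (fun _ => 1) = 0 := by
    funext a
    rw [hB2eq, Matrix.mulVec, dotProduct]
    simp only [Matrix.sub_apply, mul_one]
    rw [Finset.sum_sub_distrib]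
    rw [Finset.sum_eq_single a (fun b _ hb => Matrix.diagonal_apply_ne _ (Ne.symm hb))
      (fun h => absurd (Finset.mem_univ a) h), Matrix.diagonal_apply_eq]
    simp
  have hones_ne : (fun _ : Fin n => (1:ℝ)) ≠ 0 := by
    intro h
    have := congrFun h ⟨0, hn⟩
    norm_num at this
  -- spectral gap on each block
  have hgap1 : ∀ x : Fin n → ℝ, (∑ a, x a) = 0 → μ * (x ⬝ᵥ x) ≤ x ⬝ᵥ B1.mulVec x := by
    intro x hx
    have hd : (fun _ : Fin n => (1:ℝ)) ⬝ᵥ x = 0 := by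
      rw [dotProduct]; simpa using hx
    have h1 := gap_lemma B1 hH1 hB1psd _ hones_ne hB1ones
      (lt_of_lt_of_le hμpos (min_le_left _ _)) x hd
    have hxx : 0 ≤ x ⬝ᵥ x := Finset.sum_nonneg (fun i _ => mul_self_nonneg _)
    calc μ * (x ⬝ᵥ x) ≤ kthEig B1 hH1 1 * (x ⬝ᵥ x) :=
          mul_le_mul_of_nonneg_right (min_le_left _ _) hxx
      _ ≤ x ⬝ᵥ B1.mulVec x := h1
  have hgap2 : ∀ x : Fin n → ℝ, (∑ a, x a) = 0 → μ * (x ⬝ᵥ x) ≤ x ⬝ᵥ B2.mulVec x := by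
    intro x hx
    have hd : (fun _ : Fin n => (1:ℝ)) ⬝ᵥ x = 0 := by
      rw [dotProduct]; simpa using hx
    have h1 := gap_lemma B2 hH2 hB2psd _ hones_ne hB2ones
      (lt_of_lt_of_le hμpos (min_le_right _ _)) x hd
    have hxx : 0 ≤ x ⬝ᵥ x := Finset.sum_nonneg (fun i _ => mul_self_nonneg _)
    calc μ * (x ⬝ᵥ x) ≤ kthEig B2 hH2 1 * (x ⬝ᵥ x) :=
          mul_le_mul_of_nonneg_right (min_le_right _ _) hxx
      _ ≤ x ⬝ᵥ B2.mulVec x := h1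
  -- μ ≤ n
  have hμn : μ ≤ (n : ℝ) := by
    have hbnd : ∀ x : Fin n → ℝ, x ⬝ᵥ B1.mulVec x ≤ (n:ℝ) * (x ⬝ᵥ x) := by
      intro x
      have h1 := hnorm (Sum.elim x (fun _ : Fin n => (0:ℝ)))
      rw [hblock (Sum.elim x (fun _ : Fin n => (0:ℝ)))] at h1
      have e1 : (fun a => Sum.elim x (fun _ : Fin n => (0:ℝ)) (Sum.inl a)) = x := by funext a; simp
      have e2 : (fun a => Sum.elim x (fun _ : Fin n => (0:ℝ)) (Sum.inr a)) = (fun _ => (0:ℝ)) := by funext a; simp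
      rw [e1, e2] at h1
      have e3 : (fun _ : Fin n => (0:ℝ)) ⬝ᵥ B2.mulVec (fun _ => (0:ℝ)) = 0 := by
        rw [dotProduct]; simp
      rw [e3, add_zero] at h1
      have e4 : Sum.elim x (fun _ : Fin n => (0:ℝ)) ⬝ᵥ Sum.elim x (fun _ : Fin n => (0:ℝ)) = x ⬝ᵥ x := by
        rw [dotProduct, dotProduct, Fintype.sum_sum_type]
        simp
      rw [e4] at h1
      exact h1
    have hc : 1 < Fintype.card (Fin n) := by simp; omega
    exact le_trans (min_le_left _ _) (kthEig_le_of_bound B1 hH1 n hbnd 1 hc)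
  -- apply the main criterion with the ±1 vector s
  have hcardι : 1 < Fintype.card (Fin n ⊕ Fin n) := by
    simp only [Fintype.card_sum, Fintype.card_fin]
    omega
  apply second_eig_pos M hMH hcardι s
  intro v hvne hsv
  obtain ⟨w, hw_def⟩ : ∃ w : Fin n ⊕ Fin n → ℝ, w = fun i => s i * v i := ⟨_, rfl⟩
  have hvw : ∀ i, v i = s i * w i := by
    intro i
    rw [hw_def]
    rw [← mul_assoc, hss i, one_mul]
  have hsw_v : ∀ i, s i * w i = v i := fun i => (hvw i).symm
  have hwne : w ≠ 0 := by
    intro h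
    apply hvne
    funext i
    rw [hvw i, h]
    simp
  -- pointwise conjugation identity
  have hpt : ∀ i j, v i * (M i j * v j)
      = w i * (Liso i j * w j)
        - w i * ((Matrix.diagonal (fun k => ∑ l, Wδ k l) - Wδ) i j * w j)
        + (1/2) * (v i * v j) := by
    intro i j
    rw [hM, hLiso]
    simp only [Matrix.sub_apply, Matrix.add_apply, Matrix.smul_apply, Matrix.of_apply,
      smul_eq_mul]
    rcases i with a | a <;> rcases j with b | b
    · have h1 : Wδ (Sum.inl a) (Sum.inl b) = 0 := by rw [hWδ']; simp
      have h2 : Wiso (Sum.inl a) (Sum.inl b) = W (Sum.inl a) (Sum.inl b) := by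
        rw [hWiso]; simp
      have hva : v (Sum.inl a) = w (Sum.inl a) := by rw [hvw]; simp [hs_def]
      have hvb : v (Sum.inl b) = w (Sum.inl b) := by rw [hvw]; simp [hs_def]
      rw [h1, h2, hva, hvb]
      ring
    · have h1 : Wδ (Sum.inl a) (Sum.inr b) = W (Sum.inl a) (Sum.inr b) := by
        rw [hWδ']; simp
      have h2 : Wiso (Sum.inl a) (Sum.inr b) = 0 := by rw [hWiso]; simp
      have hd1 : Matrix.diagonal (fun k => ∑ l, Wiso k l) (Sum.inl a) (Sum.inr b) = 0 :=
        Matrix.diagonal_apply_ne _ (by simp)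
      have hd2 : Matrix.diagonal (fun k => ∑ l, Wδ k l) (Sum.inl a) (Sum.inr b) = 0 :=
        Matrix.diagonal_apply_ne _ (by simp)
      have hva : v (Sum.inl a) = w (Sum.inl a) := by rw [hvw]; simp [hs_def]
      have hvb : v (Sum.inr b) = -w (Sum.inr b) := by rw [hvw]; simp [hs_def]
      rw [h1, h2, hd1, hd2, hva, hvb]
      ring
    · have h1 : Wδ (Sum.inr a) (Sum.inl b) = W (Sum.inr a) (Sum.inl b) := by
        rw [hWδ']; simp
      have h2 : Wiso (Sum.inr a) (Sum.inl b) = 0 := by rw [hWiso]; simp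
      have hd1 : Matrix.diagonal (fun k => ∑ l, Wiso k l) (Sum.inr a) (Sum.inl b) = 0 :=
        Matrix.diagonal_apply_ne _ (by simp)
      have hd2 : Matrix.diagonal (fun k => ∑ l, Wδ k l) (Sum.inr a) (Sum.inl b) = 0 :=
        Matrix.diagonal_apply_ne _ (by simp)
      have hva : v (Sum.inr a) = -w (Sum.inr a) := by rw [hvw]; simp [hs_def]
      have hvb : v (Sum.inl b) = w (Sum.inl b) := by rw [hvw]; simp [hs_def]
      rw [h1, h2, hd1, hd2, hva, hvb]
      ring
    · have h1 : Wδ (Sum.inr a) (Sum.inr b) = 0 := by rw [hWδ']; simp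
      have h2 : Wiso (Sum.inr a) (Sum.inr b) = W (Sum.inr a) (Sum.inr b) := by
        rw [hWiso]; simp
      have hva : v (Sum.inr a) = -w (Sum.inr a) := by rw [hvw]; simp [hs_def]
      have hvb : v (Sum.inr b) = -w (Sum.inr b) := by rw [hvw]; simp [hs_def]
      rw [h1, h2, hva, hvb]
      ring
  -- quadratic form identity
  have hQ : v ⬝ᵥ M.mulVec v
      = w ⬝ᵥ Liso.mulVec w
        - w ⬝ᵥ ((Matrix.diagonal (fun k => ∑ l, Wδ k l) - Wδ)).mulVec w
        + (1/2) * (∑ i, v i)^2 := by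
    rw [quadform_sum, quadform_sum, quadform_sum]
    have e : ∀ i, ∑ j, v i * (M i j * v j)
        = (∑ j, w i * (Liso i j * w j))
          - (∑ j, w i * ((Matrix.diagonal (fun k => ∑ l, Wδ k l) - Wδ) i j * w j))
          + ∑ j, (1/2) * (v i * v j) := by
      intro i
      rw [Finset.sum_congr rfl (fun j _ => hpt i j), Finset.sum_add_distrib,
        Finset.sum_sub_distrib]
    rw [Finset.sum_congr rfl (fun i _ => e i), Finset.sum_add_distrib,
      Finset.sum_sub_distrib]
    congr 1
    rw [sq, Finset.sum_mul_sum, Finset.mul_sum]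
    apply Finset.sum_congr rfl; intro i _
    rw [Finset.mul_sum]
  -- kernel vector of Liso
  have hLs : Liso.mulVec s = 0 := by
    funext i
    show (fun j => Liso i j) ⬝ᵥ s = 0
    rw [dotProduct, Fintype.sum_sum_type]
    have h2 := hrowL i
    rw [Fintype.sum_sum_type] at h2
    rcases i with a | a
    · have h1 : ∑ b, Liso (Sum.inl a) (Sum.inr b) = 0 :=
        Finset.sum_eq_zero (fun b _ => hcrossL1 a b)
      simp only [hs_def, Sum.elim_inl, Sum.elim_inr, mul_one, mul_neg]
      rw [h1] at h2
      rw [Finset.sum_congr rfl (fun b _ => by rw [hcrossL1 a b] : ∀ b ∈ Finset.univ,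
        -Liso (Sum.inl a) (Sum.inr b) = -(0:ℝ))]
      simp only [neg_zero, Finset.sum_const_zero, add_zero]
      linarith
    · have h1 : ∑ b, Liso (Sum.inr a) (Sum.inl b) = 0 :=
        Finset.sum_eq_zero (fun b _ => hcrossL2 a b)
      simp only [hs_def, Sum.elim_inl, Sum.elim_inr, mul_one, mul_neg]
      rw [h1] at h2
      rw [h1]
      have h3 : ∑ b, -Liso (Sum.inr a) (Sum.inr b) = -∑ b, Liso (Sum.inr a) (Sum.inr b) := by
        rw [Finset.sum_neg_distrib]
      rw [h3]
      linarith
  -- decomposition w = c • s + w'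
  have hnR : (0:ℝ) < (n:ℝ) := by exact_mod_cast hn
  obtain ⟨c, hc_def⟩ : ∃ c : ℝ, c = (∑ i, v i) / (2*n) := ⟨_, rfl⟩
  obtain ⟨w', hw'_def⟩ : ∃ w' : Fin n ⊕ Fin n → ℝ, w' = fun i => w i - c * s i := ⟨_, rfl⟩
  have hTc : (∑ i, v i) = c * (2*n) := by
    rw [hc_def]
    field_simp
  have hsw : ∑ i, s i * w i = ∑ i, v i :=
    Finset.sum_congr rfl (fun i _ => hsw_v i)
  have hsumw : ∑ i, w i = 0 := by
    have := hsv
    rw [dotProduct] at this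
    have h2 : ∑ i, s i * v i = ∑ i, w i :=
      Finset.sum_congr rfl (fun i _ => by rw [hw_def])
    rw [h2] at this
    exact this
  have hsumw' : ∑ i, w' i = 0 := by
    rw [hw'_def]
    rw [Finset.sum_sub_distrib, hsumw, ← Finset.mul_sum, hsum_s]
    ring
  have hsw' : ∑ i, s i * w' i = 0 := by
    have h1 : ∀ i, s i * w' i = s i * w i - c * (s i * s i) := by
      intro i; rw [hw'_def]; ring
    rw [Finset.sum_congr rfl (fun i _ => h1 i), Finset.sum_sub_distrib, hsw, ← Finset.mul_sum]
    rw [Finset.sum_congr rfl (fun i _ => hss i), Finset.sum_const, Finset.card_univ]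
    simp only [Fintype.card_sum, Fintype.card_fin, nsmul_eq_mul]
    rw [hTc]
    push_cast
    ring
  have hwfun : w = w' + c • s := by
    funext i
    simp only [Pi.add_apply, Pi.smul_apply, smul_eq_mul, hw'_def]
    ring
  have hsdotw' : s ⬝ᵥ w' = 0 := hsw'
  -- w Liso w = w' Liso w'
  have hwLw : w ⬝ᵥ Liso.mulVec w = w' ⬝ᵥ Liso.mulVec w' := by
    rw [hwfun, Matrix.mulVec_add, Matrix.mulVec_smul, hLs, smul_zero, add_zero,
      add_dotProduct, smul_dotProduct]
    have h1 : s ⬝ᵥ Liso.mulVec w' = 0 := by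
      rw [← herm_dot Liso hLisoH s w', hLs, zero_dotProduct]
    rw [h1]
    simp
  have hww : w ⬝ᵥ w = w' ⬝ᵥ w' + c^2 * (2*n) := by
    have h1 : w' ⬝ᵥ s = 0 := by rw [dotProduct_comm]; exact hsdotw'
    rw [hwfun]
    simp only [add_dotProduct, dotProduct_add, smul_dotProduct, dotProduct_smul, smul_eq_mul]
    rw [h1, hsdotw', hs_dot]
    ring
  -- block sums of w'
  have hsum_split : ∑ a, w' (Sum.inl a) + ∑ a, w' (Sum.inr a) = 0 := by
    have := hsumw'
    rwa [Fintype.sum_sum_type] at this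
  have hsw'_split : ∑ a, w' (Sum.inl a) - ∑ a, w' (Sum.inr a) = 0 := by
    have := hsw'
    rw [Fintype.sum_sum_type] at this
    simp only [hs_def, Sum.elim_inl, Sum.elim_inr, one_mul, neg_one_mul] at this
    rw [Finset.sum_neg_distrib] at this
    linarith
  have hx1sum : ∑ a, w' (Sum.inl a) = 0 := by linarith
  have hx2sum : ∑ a, w' (Sum.inr a) = 0 := by linarith
  -- lower bound for the Liso part
  have hsplitdot : w' ⬝ᵥ w'
      = (fun a => w' (Sum.inl a)) ⬝ᵥ (fun a => w' (Sum.inl a))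
        + (fun a => w' (Sum.inr a)) ⬝ᵥ (fun a => w' (Sum.inr a)) := by
    rw [dotProduct, dotProduct, dotProduct, Fintype.sum_sum_type]
  have hQiso : μ * (w' ⬝ᵥ w') ≤ w ⬝ᵥ Liso.mulVec w := by
    rw [hwLw, hblock w']
    have h1 := hgap1 (fun a => w' (Sum.inl a)) hx1sum
    have h2 := hgap2 (fun a => w' (Sum.inr a)) hx2sum
    rw [hsplitdot]
    linarith
  -- upper bound for the Wδ Laplacian part
  have hQδ : w ⬝ᵥ ((Matrix.diagonal (fun k => ∑ l, Wδ k l) - Wδ)).mulVec w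
      ≤ 2 * Dmax * (w ⬝ᵥ w) :=
    lap_upper Wδ hWδsymm hWδnn Dmax hdδle w
  -- positivity of w
  have hwpos : 0 < w ⬝ᵥ w := by
    have hge : 0 ≤ w ⬝ᵥ w := Finset.sum_nonneg (fun i _ => mul_self_nonneg _)
    have hne : w ⬝ᵥ w ≠ 0 := fun h => hwne (dotProduct_self_eq_zero.mp h)
    exact lt_of_le_of_ne hge (Ne.symm hne)
  have hw'nn : 0 ≤ w' ⬝ᵥ w' := Finset.sum_nonneg (fun i _ => mul_self_nonneg _)
  -- final computation
  rw [hQ, hTc]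
  have hgapμ : 2 * Dmax < μ := hgap
  have hkey : 0 < (μ - 2*Dmax) * ((w' ⬝ᵥ w') + c^2 * (2*n)) := by
    apply mul_pos (by linarith)
    rw [← hww]
    exact hwpos
  nlinarith [hQiso, hQδ, hww, hμn, sq_nonneg c, hw'nn, hnR,
    mul_nonneg (mul_nonneg (le_of_lt hnR) (sq_nonneg c)) (sub_nonneg.mpr hμn)]
end
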